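/- arXiv:1101.4015 — 6 statements merged into one kernel-verified Lean document; each statement's English description precedes it below -/
import Mathlib

section
/- Let a, b > 0 and let u : [0,∞) → ℝ be a differentiable function such that u(t) ≥ 0 for all t ≥ 0 and u'(t) ≤ a·u(t) − b·u(t)² for all t > 0. Then u is bounded above; more precisely sup_{t ≥ 0} u(t) ≤ max(u(0), a/b). -/
/-- Logistic comparison lemma (boundedness): if `u : [0,∞) → ℝ` is differentiable,
nonnegative, and satisfies the logistic differential inequality
`u'(t) ≤ a·u(t) − b·u(t)²` for `t > 0`, with `a, b > 0`, then `u` is bounded above by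
`max (u 0) (a / b)`. -/
theorem logistic_inequality_bounded
    (a b : ℝ) (ha : 0 < a) (hb : 0 < b)
    (u u' : ℝ → ℝ)
    (hderiv : ∀ t : ℝ, 0 ≤ t → HasDerivAt u (u' t) t)
    (hnonneg : ∀ t : ℝ, 0 ≤ t → 0 ≤ u t)
    (hineq : ∀ t : ℝ, 0 < t → u' t ≤ a * u t - b * (u t) ^ 2) :
    ∀ t : ℝ, 0 ≤ t → u t ≤ max (u 0) (a / b) := by
  intro t₀ ht₀
  set M : ℝ := max (u 0) (a / b) with hM
  by_contra hcon
  push_neg at hcon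
  -- continuity of u on [0, t₀]
  have hcont : ContinuousOn u (Set.Icc 0 t₀) := fun x hx =>
    ((hderiv x hx.1).continuousAt).continuousWithinAt
  -- the set of times in [0, t₀] where u ≤ M
  set S : Set ℝ := Set.Icc (0:ℝ) t₀ ∩ u ⁻¹' Set.Iic M with hS
  have h0S : (0:ℝ) ∈ S := ⟨⟨le_refl 0, ht₀⟩, Set.mem_preimage.mpr (Set.mem_Iic.mpr (le_max_left _ _))⟩
  have hSne : S.Nonempty := ⟨0, h0S⟩
  have hSbdd : BddAbove S := ⟨t₀, fun x hx => hx.1.2⟩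
  have hSclosed : IsClosed S :=
    hcont.preimage_isClosed_of_isClosed isClosed_Icc isClosed_Iic
  set s : ℝ := sSup S with hs
  have hsS : s ∈ S := hSclosed.csSup_mem hSne hSbdd
  have hs0 : 0 ≤ s := hsS.1.1
  have hst : s < t₀ := lt_of_le_of_ne hsS.1.2 (by
    intro h
    exact absurd (h ▸ hsS.2) (not_le.mpr hcon))
  -- on (s, t₀], u > M
  have hgt : ∀ x ∈ Set.Ioo s t₀, M < u x := by
    intro x hx
    by_contra hle
    push_neg at hle
    have : x ∈ S := ⟨⟨le_trans hs0 hx.1.le, hx.2.le⟩, hle⟩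
    exact absurd (le_csSup hSbdd this) (not_le.mpr hx.1)
  -- MVT on [s, t₀]
  obtain ⟨c, hc, hc'⟩ := exists_hasDerivAt_eq_slope u u' hst
    (hcont.mono (Set.Icc_subset_Icc_left hs0))
    (fun x hx => hderiv x (le_trans hs0 hx.1.le))
  have hcpos : 0 < c := lt_of_le_of_lt hs0 hc.1
  have hucM : M < u c := hgt c hc
  have huc_ab : a / b < u c := lt_of_le_of_lt (le_max_right _ _) hucM
  have hneg : a * u c - b * (u c) ^ 2 < 0 := by
    have h1 : a < b * u c := (div_lt_iff₀' hb).mp huc_ab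
    have h2 : 0 < u c := lt_of_le_of_lt (le_trans (hnonneg 0 le_rfl) (le_max_left _ _)) hucM
    nlinarith
  have hpos : 0 < u' c := by
    rw [hc']
    apply div_pos _ (sub_pos.mpr hst)
    have : u s ≤ M := hsS.2
    have : M < u t₀ := hcon
    linarith [hsS.2]
  linarith [hineq c hcpos]
end

section
/- Fix real parameters r₁, r₂ ∈ ℝ, β₁, β₂ > 0 and nonnegative λ₁₁, λ₁₂, λ₂₁, λ₂₂. For every t₀ ≥ 0 and every initial value y = (y₁, y₂) ∈ ℝ₊² (the closed nonnegative quadrant), the Lotka–Volterra system y'(t) = c(y(t)), y(t₀) = y, admits a unique solution defined on all of [t₀, ∞); this solution takes values in ℝ₊² for all t ≥ t₀ (in particular it does not explode in finite time). -/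
open Set

/-- The Lotka–Volterra vector field
`c(y₁,y₂) = (y₁(r₁ − β₁(λ₁₁y₁ + λ₁₂y₂)), y₂(r₂ − β₂(λ₂₁y₁ + λ₂₂y₂)))`. -/
noncomputable def LVfield (r₁ r₂ β₁ β₂ l₁₁ l₁₂ l₂₁ l₂₂ : ℝ) (y : ℝ × ℝ) : ℝ × ℝ :=
  (y.1 * (r₁ - β₁ * (l₁₁ * y.1 + l₁₂ * y.2)),
   y.2 * (r₂ - β₂ * (l₂₁ * y.1 + l₂₂ * y.2)))

open Real

theorem LV_contDiff (r₁ r₂ β₁ β₂ l₁₁ l₁₂ l₂₁ l₂₂ : ℝ) :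
    ContDiff ℝ 1 (LVfield r₁ r₂ β₁ β₂ l₁₁ l₁₂ l₂₁ l₂₂) := by
  unfold LVfield; fun_prop

theorem LV_lip_bound (r₁ r₂ β₁ β₂ l₁₁ l₁₂ l₂₁ l₂₂ : ℝ) (ρ : ℝ) :
    ∃ (L : NNReal) (C : ℝ), 1 ≤ C ∧
      LipschitzOnWith L (LVfield r₁ r₂ β₁ β₂ l₁₁ l₁₂ l₂₁ l₂₂) (Metric.closedBall 0 ρ) ∧
      ∀ y ∈ Metric.closedBall (0 : ℝ × ℝ) ρ, ‖LVfield r₁ r₂ β₁ β₂ l₁₁ l₁₂ l₂₁ l₂₂ y‖ ≤ C := by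
  have hc := LV_contDiff r₁ r₂ β₁ β₂ l₁₁ l₁₂ l₂₁ l₂₂
  have hcomp : IsCompact (Metric.closedBall (0 : ℝ × ℝ) ρ) := isCompact_closedBall _ _
  obtain ⟨K, hK⟩ := hcomp.exists_bound_of_continuousOn
    ((hc.continuous_fderiv one_ne_zero).continuousOn (s := Metric.closedBall 0 ρ))
  obtain ⟨C, hC⟩ := hcomp.exists_bound_of_continuousOn (hc.continuous.continuousOn
    (s := Metric.closedBall 0 ρ))
  refine ⟨K.toNNReal, max C 1, le_max_right _ _, ?_, fun y hy => (hC y hy).trans (le_max_left _ _)⟩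
  apply Convex.lipschitzOnWith_of_nnnorm_fderiv_le
    (fun x _ => hc.differentiable one_ne_zero x) ?_ (convex_closedBall _ _)
  intro x hx
  have := hK x hx
  simpa [← NNReal.coe_le_coe, Real.coe_toNNReal _ ((norm_nonneg _).trans (hK x hx))] using this

theorem pl_exists_mem {E : Type*} [NormedAddCommGroup E] [NormedSpace ℝ E] [CompleteSpace E]
    {v : ℝ → E → E} {tMin tMax : ℝ} {t₀ : Icc tMin tMax} (x₀ : E) {a L K : NNReal}
    (hpl : IsPicardLindelof v t₀ x₀ a 0 L K) :
    ∃ f : ℝ → E, f t₀ = x₀ ∧ (∀ t ∈ Icc tMin tMax, f t ∈ Metric.closedBall x₀ a) ∧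
      ∀ t ∈ Icc tMin tMax, HasDerivWithinAt f (v t (f t)) (Icc tMin tMax) t := by
  obtain ⟨α, hα⟩ := ODE.FunSpace.exists_isFixedPt_next hpl (x := x₀) (Metric.mem_closedBall_self le_rfl)
  refine ⟨α.compProj, by rw [ODE.FunSpace.compProj_val, ← hα, ODE.FunSpace.next_apply₀],
    fun t _ => α.compProj_mem_closedBall hpl.mul_max_le, fun t ht => ?_⟩
  apply ODE.hasDerivWithinAt_picard_Icc t₀.2 hpl.continuousOn_uncurry
    α.continuous_compProj.continuousOn (fun _ _ => α.compProj_mem_closedBall hpl.mul_max_le)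
    x₀ ht |>.congr_of_mem _ ht
  intro t' ht'
  nth_rw 1 [← hα]
  rw [ODE.FunSpace.compProj_of_mem ht', ODE.FunSpace.next_apply]

theorem exp_form {u g : ℝ → ℝ} {a b : ℝ}
    (hu : ∀ t ∈ Icc a b, HasDerivWithinAt u (u t * g t) (Icc a b) t)
    (hg : Continuous g) :
    ∀ t ∈ Icc a b, u t = u a * Real.exp (∫ s in a..t, g s) := by
  rcases le_or_gt a b with hab | hab
  · set G : ℝ → ℝ := fun t => ∫ s in a..t, g s with hGdef
    have hG : ∀ t : ℝ, HasDerivAt G (g t) t := fun t =>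
      intervalIntegral.integral_hasDerivAt_right (hg.intervalIntegrable _ _)
        (hg.stronglyMeasurableAtFilter _ _) hg.continuousAt
    set h : ℝ → ℝ := fun t => u t * Real.exp (-G t) with hhdef
    have hcont : ContinuousOn h (Icc a b) := by
      have hucont : ContinuousOn u (Icc a b) := fun t ht =>
        (hu t ht).continuousWithinAt
      exact hucont.mul ((Real.continuous_exp.comp (continuous_neg.comp
        (continuous_iff_continuousAt.2 fun t => (hG t).continuousAt))).continuousOn)
    have hderiv : ∀ t ∈ Ico a b, HasDerivWithinAt h 0 (Ici t) t := by
      intro t ht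
      have h1 : HasDerivWithinAt u (u t * g t) (Ici t) t :=
        (hu t (Ico_subset_Icc_self ht)).mono_of_mem_nhdsWithin (Icc_mem_nhdsGE_of_mem ht)
      have h2 : HasDerivAt (fun t => Real.exp (-G t)) (Real.exp (-G t) * (-g t)) t :=
        ((hG t).neg).exp
      have := h1.mul (h2.hasDerivWithinAt)
      refine this.congr_deriv ?_
      ring
    have hconst := constant_of_has_deriv_right_zero hcont hderiv
    intro t ht
    have h0 : u t * Real.exp (-G t) = u a * Real.exp (-G a) := hconst t ht
    have hGa : G a = 0 := intervalIntegral.integral_same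
    rw [hGa, neg_zero, Real.exp_zero, mul_one] at h0
    have := congrArg (fun x => x * Real.exp (G t)) h0
    simpa [mul_assoc, ← Real.exp_add] using this
  · intro t ht
    exact absurd (ht.1.trans ht.2) (not_le.2 hab)

section
variable {r₁ r₂ β₁ β₂ l₁₁ l₁₂ l₂₁ l₂₂ : ℝ}
  (hβ₁ : 0 < β₁) (hβ₂ : 0 < β₂)
  (hl₁₁ : 0 ≤ l₁₁) (hl₁₂ : 0 ≤ l₁₂) (hl₂₁ : 0 ≤ l₂₁) (hl₂₂ : 0 ≤ l₂₂)

local notation "c" => LVfield r₁ r₂ β₁ β₂ l₁₁ l₁₂ l₂₁ l₂₂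

include hβ₁ hβ₂ hl₁₁ hl₁₂ hl₂₁ hl₂₂ in
/-- positivity and exponential bound for solutions on `[a,b]`. -/
theorem LV_bound {f : ℝ → ℝ × ℝ} {a b : ℝ} (hab : a ≤ b)
    (h0 : 0 ≤ (f a).1 ∧ 0 ≤ (f a).2)
    (hf : ∀ t ∈ Icc a b, HasDerivWithinAt f (c (f t)) (Icc a b) t) :
    ∀ t ∈ Icc a b,
      (0 ≤ (f t).1 ∧ (f t).1 ≤ (f a).1 * Real.exp (|r₁| * (b - a))) ∧
      (0 ≤ (f t).2 ∧ (f t).2 ≤ (f a).2 * Real.exp (|r₂| * (b - a))) := by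
  have hproj : ∀ t ∈ Icc a b, (projIcc a b hab t : ℝ) = t := fun t ht => by
    simp [projIcc_of_mem hab ht]
  have hfc : ContinuousOn f (Icc a b) := fun t ht => (hf t ht).continuousWithinAt
  have hfp : Continuous fun t => f (projIcc a b hab t) :=
    hfc.comp_continuous (continuous_subtype_val.comp continuous_projIcc)
      (fun t => (projIcc a b hab t).2)
  set g₁ : ℝ → ℝ := fun t => r₁ - β₁ * (l₁₁ * (f (projIcc a b hab t)).1 +
    l₁₂ * (f (projIcc a b hab t)).2) with hg₁def
  set g₂ : ℝ → ℝ := fun t => r₂ - β₂ * (l₂₁ * (f (projIcc a b hab t)).1 +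
    l₂₂ * (f (projIcc a b hab t)).2) with hg₂def
  have hg₁ : Continuous g₁ := by
    rw [hg₁def]
    exact continuous_const.sub (continuous_const.mul
      ((continuous_const.mul (continuous_fst.comp hfp)).add
        (continuous_const.mul (continuous_snd.comp hfp))))
  have hg₂ : Continuous g₂ := by
    rw [hg₂def]
    exact continuous_const.sub (continuous_const.mul
      ((continuous_const.mul (continuous_fst.comp hfp)).add
        (continuous_const.mul (continuous_snd.comp hfp))))
  have hu₁ : ∀ t ∈ Icc a b, HasDerivWithinAt (fun t => (f t).1) ((f t).1 * g₁ t) (Icc a b) t := by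
    intro t ht
    have := ((hf t ht).hasFDerivWithinAt.fst).hasDerivWithinAt
    simp only [hg₁def, hproj t ht]
    refine this.congr_deriv ?_
    simp [LVfield]
  have hu₂ : ∀ t ∈ Icc a b, HasDerivWithinAt (fun t => (f t).2) ((f t).2 * g₂ t) (Icc a b) t := by
    intro t ht
    have := ((hf t ht).hasFDerivWithinAt.snd).hasDerivWithinAt
    simp only [hg₂def, hproj t ht]
    refine this.congr_deriv ?_
    simp [LVfield]
  have e₁ := exp_form hu₁ hg₁
  have e₂ := exp_form hu₂ hg₂
  have pos₁ : ∀ t ∈ Icc a b, 0 ≤ (f t).1 := fun t ht => by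
    rw [e₁ t ht]; exact mul_nonneg h0.1 (Real.exp_nonneg _)
  have pos₂ : ∀ t ∈ Icc a b, 0 ≤ (f t).2 := fun t ht => by
    rw [e₂ t ht]; exact mul_nonneg h0.2 (Real.exp_nonneg _)
  have key : ∀ (g : ℝ → ℝ) (r : ℝ), Continuous g → (∀ s ∈ Icc a b, g s ≤ r) →
      ∀ t ∈ Icc a b, (∫ s in a..t, g s) ≤ |r| * (b - a) := by
    intro g r hgc hle t ht
    have h1 : (∫ s in a..t, g s) ≤ ∫ s in a..t, r := by
      apply intervalIntegral.integral_mono_on ht.1 (hgc.intervalIntegrable _ _)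
        (intervalIntegrable_const)
      intro s hs
      exact hle s ⟨hs.1, hs.2.trans ht.2⟩
    have h2 : (∫ s in a..t, r) = r * (t - a) := by simp [mul_comm]
    calc (∫ s in a..t, g s) ≤ r * (t - a) := h1.trans_eq h2
      _ ≤ |r| * (b - a) := by
          apply mul_le_mul (le_abs_self r) (by linarith [ht.2]) (by linarith [ht.1]) (abs_nonneg r)
          |>.trans_eq rfl
  have hb₁ : ∀ s ∈ Icc a b, g₁ s ≤ r₁ := by
    intro s hs
    rw [hg₁def]
    simp only [hproj s hs]
    have n1 := pos₁ s hs
    have n2 := pos₂ s hs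
    nlinarith [mul_nonneg hl₁₁ n1, mul_nonneg hl₁₂ n2]
  have hb₂ : ∀ s ∈ Icc a b, g₂ s ≤ r₂ := by
    intro s hs
    rw [hg₂def]
    simp only [hproj s hs]
    have n1 := pos₁ s hs
    have n2 := pos₂ s hs
    nlinarith [mul_nonneg hl₂₁ n1, mul_nonneg hl₂₂ n2]
  intro t ht
  refine ⟨⟨pos₁ t ht, ?_⟩, ⟨pos₂ t ht, ?_⟩⟩
  · rw [e₁ t ht]
    exact mul_le_mul_of_nonneg_left (Real.exp_le_exp.2 (key g₁ r₁ hg₁ hb₁ t ht)) h0.1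
  · rw [e₂ t ht]
    exact mul_le_mul_of_nonneg_left (Real.exp_le_exp.2 (key g₂ r₂ hg₂ hb₂ t ht)) h0.2

theorem LV_unique {f g : ℝ → ℝ × ℝ} {a b : ℝ}
    (hf : ∀ t ∈ Icc a b, HasDerivAt f (c (f t)) t)
    (hg : ∀ t ∈ Icc a b, HasDerivAt g (c (g t)) t)
    (h0 : f a = g a) : EqOn f g (Icc a b) := by
  rcases le_or_gt a b with hab | hab
  · have hclosed : IsClosed ({t | f t = g t} ∩ Icc a b) := by
      have heq : {t | f t = g t} ∩ Icc a b = Icc a b ∩ (fun t => f t - g t) ⁻¹' {0} := by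
        ext t
        simp only [mem_inter_iff, mem_setOf_eq, mem_preimage, mem_singleton_iff, sub_eq_zero]
        tauto
      rw [heq]
      apply ContinuousOn.preimage_isClosed_of_isClosed ?_ isClosed_Icc isClosed_singleton
      exact fun t ht => ((hf t ht).continuousAt.sub (hg t ht).continuousAt).continuousWithinAt
    have := hclosed.Icc_subset_of_forall_exists_gt (a := a) (b := b) h0 ?_
    · exact fun t ht => this ht
    intro x hx y hy
    obtain ⟨hfg, hax, hxb⟩ : f x = g x ∧ a ≤ x ∧ x < b := ⟨hx.1, hx.2.1, hx.2.2⟩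
    have hxmem : x ∈ Icc a b := ⟨hax, hxb.le⟩
    obtain ⟨K, s, hs, hlip⟩ :=
      ((LV_contDiff r₁ r₂ β₁ β₂ l₁₁ l₁₂ l₂₁ l₂₂).contDiffAt (x := f x)).exists_lipschitzOnWith
    obtain ⟨ρ, hρ, hball⟩ := Metric.mem_nhds_iff.1 hs
    obtain ⟨δ₁, hδ₁, hf1⟩ := Metric.continuousAt_iff.1 (hf x hxmem).continuousAt ρ hρ
    obtain ⟨δ₂, hδ₂, hg1⟩ := Metric.continuousAt_iff.1 (hg x hxmem).continuousAt ρ hρ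
    set δ := min δ₁ δ₂ with hδdef
    have hδ : 0 < δ := lt_min hδ₁ hδ₂
    set b' := min (x + δ / 2) b with hb'def
    have hxb' : x < b' := lt_min (by linarith) hxb
    have hsub : Icc x b' ⊆ Icc a b := Icc_subset_Icc hax (min_le_right _ _)
    have hdist : ∀ t ∈ Icc x b', dist t x < δ := by
      intro t ht
      rw [Real.dist_eq, abs_of_nonneg (by linarith [ht.1])]
      have : t ≤ x + δ / 2 := ht.2.trans (min_le_left _ _)
      linarith
    have key : EqOn f g (Icc x b') := by
      apply ODE_solution_unique_of_mem_Icc_right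
        (v := fun _ => LVfield r₁ r₂ β₁ β₂ l₁₁ l₁₂ l₂₁ l₂₂)
        (s := fun _ => Metric.ball (f x) ρ) (K := K)
        (fun _ _ => hlip.mono hball)
        (fun t ht => (hf t (hsub ht)).continuousAt.continuousWithinAt)
        (fun t ht => (hf t (hsub (Ico_subset_Icc_self ht))).hasDerivWithinAt)
        (fun t ht => hf1 (lt_of_lt_of_le (hdist t (Ico_subset_Icc_self ht)) (min_le_left _ _)))
        (fun t ht => (hg t (hsub ht)).continuousAt.continuousWithinAt)
        (fun t ht => (hg t (hsub (Ico_subset_Icc_self ht))).hasDerivWithinAt)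
        (fun t ht => by
          have := hg1 (lt_of_lt_of_le (hdist t (Ico_subset_Icc_self ht)) (min_le_right _ _))
          rwa [← hfg] at this)
        hfg
    exact ⟨min b' y, key ⟨(lt_min hxb' hy).le, min_le_left _ _⟩, lt_min hxb' hy, min_le_right _ _⟩
  · intro t ht; exact absurd (ht.1.trans ht.2) (not_le.2 hab)

include hβ₁ hβ₂ hl₁₁ hl₁₂ hl₂₁ hl₂₂ in
theorem LV_exists_on {t₀ : ℝ} {y₀ : ℝ × ℝ} (hy₀ : 0 ≤ y₀.1 ∧ 0 ≤ y₀.2)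
    {T : ℝ} (hT : t₀ ≤ T) :
    ∃ f : ℝ → ℝ × ℝ, f t₀ = y₀ ∧ ∀ t ∈ Icc t₀ T, HasDerivAt f (c (f t)) t := by
  set ρ := max (y₀.1 * Real.exp (|r₁| * (T + 1 - t₀))) (y₀.2 * Real.exp (|r₂| * (T + 1 - t₀)))
    with hρdef
  have hρ1 : y₀.1 * Real.exp (|r₁| * (T + 1 - t₀)) ≤ ρ := le_max_left _ _
  have hρ2 : y₀.2 * Real.exp (|r₂| * (T + 1 - t₀)) ≤ ρ := le_max_right _ _
  have hρ0 : 0 ≤ ρ :=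
    le_trans (mul_nonneg hy₀.1 (Real.exp_nonneg _)) hρ1
  have hynorm : ∀ x : ℝ × ℝ, 0 ≤ x.1 → 0 ≤ x.2 →
      x.1 ≤ y₀.1 * Real.exp (|r₁| * (T + 1 - t₀)) →
      x.2 ≤ y₀.2 * Real.exp (|r₂| * (T + 1 - t₀)) → ‖x‖ ≤ ρ := by
    intro x h1 h2 h3 h4
    rw [Prod.norm_def]
    apply max_le
    · rw [Real.norm_eq_abs, abs_of_nonneg h1]; exact h3.trans hρ1
    · rw [Real.norm_eq_abs, abs_of_nonneg h2]; exact h4.trans hρ2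
  have hy₀ρ : ‖y₀‖ ≤ ρ := by
    apply hynorm y₀ hy₀.1 hy₀.2
    · exact le_mul_of_one_le_right hy₀.1
        (Real.one_le_exp (mul_nonneg (abs_nonneg _) (by linarith)))
    · exact le_mul_of_one_le_right hy₀.2
        (Real.one_le_exp (mul_nonneg (abs_nonneg _) (by linarith)))
  obtain ⟨L, C, hC1, hlip, hbound⟩ := LV_lip_bound r₁ r₂ β₁ β₂ l₁₁ l₁₂ l₂₁ l₂₂ (ρ + 1)
  have hC0 : 0 < C := lt_of_lt_of_le one_pos hC1
  set ε := 1 / C with hεdef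
  have hε0 : 0 < ε := by positivity
  have hε1 : ε ≤ 1 := by
    rw [hεdef]
    exact div_le_one_of_le₀ hC1 hC0.le
  have hCε : C * ε = 1 := by rw [hεdef, mul_one_div_cancel hC0.ne']
  -- the uniform Picard–Lindelöf step
  have step : ∀ (t₁ : ℝ) (x : ℝ × ℝ), ‖x‖ ≤ ρ →
      ∃ g : ℝ → ℝ × ℝ, g t₁ = x ∧
        (∀ t ∈ Icc (t₁ - ε) (t₁ + ε), g t ∈ Metric.closedBall x 1) ∧
        ∀ t ∈ Icc (t₁ - ε) (t₁ + ε),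
          HasDerivWithinAt g (c (g t)) (Icc (t₁ - ε) (t₁ + ε)) t := by
    intro t₁ x hx
    have hsub : Metric.closedBall x 1 ⊆ Metric.closedBall (0 : ℝ × ℝ) (ρ + 1) := by
      apply Metric.closedBall_subset_closedBall'
      rw [dist_zero_right]
      linarith
    have hpl : IsPicardLindelof (fun _ => LVfield r₁ r₂ β₁ β₂ l₁₁ l₁₂ l₂₁ l₂₂)
        (tmin := t₁ - ε) (tmax := t₁ + ε) ⟨t₁, by linarith, by linarith⟩ x 1 0 C.toNNReal L :=
      { lipschitzOnWith := fun _ _ => hlip.mono (fun y hy => hsub (by simpa using hy))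
        continuousOn := fun _ _ => continuousOn_const
        norm_le := fun _ _ y hy =>
          (hbound y (hsub (by simpa using hy))).trans (Real.le_coe_toNNReal C)
        mul_max_le := by
          have : max (t₁ + ε - t₁) (t₁ - (t₁ - ε)) = ε := by
            rw [add_sub_cancel_left, sub_sub_cancel, max_self]
          simp only [Real.coe_toNNReal _ hC0.le, NNReal.coe_one, NNReal.coe_zero, sub_zero]
          rw [this, hCε] }
    exact pl_exists_mem x hpl
  -- induction on the number of steps
  have main : ∀ n : ℕ, t₀ + n * ε ≤ T + 1 →
      ∃ f : ℝ → ℝ × ℝ, f t₀ = y₀ ∧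
        ∀ t ∈ Icc (t₀ - ε) (t₀ + n * ε + ε),
          HasDerivWithinAt f (c (f t)) (Icc (t₀ - ε) (t₀ + n * ε + ε)) t := by
    intro n
    induction n with
    | zero =>
      intro _
      obtain ⟨g, hg0, _, hgd⟩ := step t₀ y₀ hy₀ρ
      refine ⟨g, hg0, ?_⟩
      simpa using hgd
    | succ n ih =>
      intro hn1
      have hcast : ((n : ℝ) + 1) * ε = n * ε + ε := by ring
      have hn1' : t₀ + ((n : ℝ) + 1) * ε ≤ T + 1 := by
        push_cast at hn1
        linarith [hn1]
      have hn : t₀ + (n : ℝ) * ε ≤ T + 1 := by nlinarith [hε0.le]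
      obtain ⟨f, hf0, hfd⟩ := ih hn
      set q := t₀ + n * ε + ε with hqdef
      have hq : t₀ ≤ q := by
        have : 0 ≤ (n : ℝ) * ε := by positivity
        simp only [hqdef]; linarith
      have hqT : q ≤ T + 1 := by
        simp only [hqdef]; linarith [hn1']
      have hsub1 : Icc t₀ q ⊆ Icc (t₀ - ε) (t₀ + n * ε + ε) :=
        Icc_subset_Icc (by linarith) le_rfl
      have hmono : ∀ t ∈ Icc t₀ q, HasDerivWithinAt f (c (f t)) (Icc t₀ q) t :=
        fun t ht => (hfd t (hsub1 ht)).mono hsub1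
      have hbd := LV_bound hβ₁ hβ₂ hl₁₁ hl₁₂ hl₂₁ hl₂₂ hq (by rw [hf0]; exact hy₀) hmono
      have hfq : ∀ t ∈ Icc t₀ q, ‖f t‖ ≤ ρ := by
        intro t ht
        obtain ⟨⟨p1, b1⟩, ⟨p2, b2⟩⟩ := hbd t ht
        rw [hf0] at b1 b2
        apply hynorm _ p1 p2
        · exact b1.trans (mul_le_mul_of_nonneg_left
            (Real.exp_le_exp.2 (mul_le_mul_of_nonneg_left (by linarith) (abs_nonneg _))) hy₀.1)
        · exact b2.trans (mul_le_mul_of_nonneg_left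
            (Real.exp_le_exp.2 (mul_le_mul_of_nonneg_left (by linarith) (abs_nonneg _))) hy₀.2)
      have hfqρ : ‖f q‖ ≤ ρ := hfq q ⟨hq, le_rfl⟩
      obtain ⟨g, hgq, hgball, hgd⟩ := step q (f q) hfqρ
      -- f and g agree on the overlap [q - ε, q]
      have hov : EqOn f g (Icc (q - ε) q) := by
        have hqe : t₀ ≤ q - ε := by
          have : 0 ≤ (n : ℝ) * ε := by positivity
          simp only [hqdef]; linarith
        apply ODE_solution_unique_of_mem_Icc_left
          (v := fun _ => LVfield r₁ r₂ β₁ β₂ l₁₁ l₁₂ l₂₁ l₂₂)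
          (s := fun _ => Metric.closedBall (0 : ℝ × ℝ) (ρ + 1)) (K := L)
          (fun _ _ => hlip)
          (fun t ht => (hmono t ⟨hqe.trans ht.1, ht.2⟩).continuousWithinAt.mono
            (Icc_subset_Icc (by linarith) le_rfl))
          ?_ ?_
          (fun t ht => (hgd t ⟨by linarith [ht.1], by linarith [ht.2]⟩).continuousWithinAt.mono
            (Icc_subset_Icc le_rfl (by linarith)))
          ?_ ?_ hgq.symm
        · -- f deriv within Iic
          intro t ht
          have htm : t ∈ Icc t₀ q := ⟨hqe.trans ht.1.le, ht.2⟩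
          have h1 : HasDerivWithinAt f (c (f t)) (Icc t₀ t) t :=
            (hmono t htm).mono (Icc_subset_Icc le_rfl ht.2)
          exact h1.mono_of_mem_nhdsWithin (Icc_mem_nhdsLE_of_mem
            ⟨lt_of_le_of_lt hqe ht.1, le_rfl⟩)
        · -- f in ball
          intro t ht
          rw [Metric.mem_closedBall, dist_zero_right]
          exact (hfq t ⟨hqe.trans ht.1.le, ht.2⟩).trans (by linarith)
        · -- g deriv within Iic
          intro t ht
          have h1 : HasDerivWithinAt g (c (g t)) (Icc (q - ε) t) t :=
            (hgd t ⟨by linarith [ht.1], by linarith [ht.2]⟩).mono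
              (Icc_subset_Icc le_rfl (by linarith [ht.2]))
          exact h1.mono_of_mem_nhdsWithin (Icc_mem_nhdsLE_of_mem ⟨ht.1, le_rfl⟩)
        · -- g in ball
          intro t ht
          have := hgball t ⟨by linarith [ht.1], by linarith [ht.2]⟩
          rw [Metric.mem_closedBall] at this ⊢
          calc dist (g t) 0 ≤ dist (g t) (f q) + dist (f q) 0 := dist_triangle _ _ _
            _ ≤ 1 + ρ := by
                rw [dist_zero_right]
                exact add_le_add this hfqρ
            _ = ρ + 1 := by ring
      -- glue
      set F : ℝ → ℝ × ℝ := fun t => if t ≤ q then f t else g t with hFdef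
      have hFf : ∀ t, t ≤ q → F t = f t := fun t ht => by simp [hFdef, ht]
      have hFg : ∀ t ∈ Icc q (q + ε), F t = g t := by
        intro t ht
        rcases le_or_gt t q with h | h
        · have : t = q := le_antisymm h ht.1
          rw [hFf t h, this, hgq]
        · simp [hFdef, not_le.2 h]
      refine ⟨F, by rw [hFf t₀ hq, hf0], ?_⟩
      have hEnd : t₀ + (↑(n + 1) : ℝ) * ε + ε = q + ε := by
        push_cast
        simp only [hqdef]; ring
      rw [hEnd]
      have hIun : Icc (t₀ - ε) q ∪ Icc q (q + ε) = Icc (t₀ - ε) (q + ε) :=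
        Icc_union_Icc_eq_Icc (by linarith) (by linarith)
      intro t ht
      rcases lt_trichotomy t q with h | h | h
      · -- use f
        have htm : t ∈ Icc (t₀ - ε) q := ⟨ht.1, h.le⟩
        have hmem : Icc (t₀ - ε) q ∈ nhdsWithin t (Icc (t₀ - ε) (q + ε)) := by
          apply mem_nhdsWithin.2
          exact ⟨Iio q, isOpen_Iio, h, fun s hs => ⟨hs.2.1, hs.1.le⟩⟩
        have h1 : HasDerivWithinAt f (c (f t)) (Icc (t₀ - ε) q) t :=
          (hfd t htm).mono (Icc_subset_Icc le_rfl (by simp only [hqdef]; linarith))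
        have h2 : HasDerivWithinAt F (c (F t)) (Icc (t₀ - ε) q) t := by
          rw [hFf t h.le]
          exact h1.congr (fun s hs => hFf s hs.2) (hFf t h.le)
        exact h2.mono_of_mem_nhdsWithin hmem
      · -- at the junction t = q
        rw [h]
        have hd : c (F q) = c (f q) := by rw [hFf q le_rfl]
        have hleft : HasDerivWithinAt F (c (F q)) (Icc (t₀ - ε) q) q := by
          have h1 : HasDerivWithinAt f (c (f q)) (Icc (t₀ - ε) q) q :=
            hfd q ⟨by linarith [hq], le_rfl⟩
          rw [hd]
          exact h1.congr (fun s hs => hFf s hs.2) (hFf q le_rfl)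
        have hright : HasDerivWithinAt F (c (F q)) (Icc q (q + ε)) q := by
          have h1 : HasDerivWithinAt g (c (g q)) (Icc q (q + ε)) q :=
            (hgd q ⟨by linarith, by linarith⟩).mono (Icc_subset_Icc (by linarith) le_rfl)
          have h2 : c (F q) = c (g q) := by rw [hFg q ⟨le_rfl, by linarith⟩]
          rw [h2]
          exact h1.congr (fun s hs => hFg s hs) (hFg q ⟨le_rfl, by linarith⟩)
        have := hleft.union hright
        rwa [Icc_union_Icc_eq_Icc (by linarith [hq]) (by linarith)] at this
      · -- use g
        have htm : t ∈ Icc q (q + ε) := ⟨h.le, ht.2⟩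
        have hmem : Icc q (q + ε) ∈ nhdsWithin t (Icc (t₀ - ε) (q + ε)) := by
          apply mem_nhdsWithin.2
          exact ⟨Ioi q, isOpen_Ioi, h, fun s hs => ⟨hs.1.le, hs.2.2⟩⟩
        have h1 : HasDerivWithinAt g (c (g t)) (Icc q (q + ε)) t :=
          (hgd t ⟨by linarith [htm.1], htm.2⟩).mono (Icc_subset_Icc (by linarith) le_rfl)
        have h2 : HasDerivWithinAt F (c (F t)) (Icc q (q + ε)) t := by
          rw [hFg t htm]
          exact h1.congr (fun s hs => hFg s hs) (hFg t htm)
        exact h2.mono_of_mem_nhdsWithin hmem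
  -- conclude
  set n := Nat.ceil ((T - t₀) / ε) with hndef
  have hn1 : T - t₀ ≤ n * ε := by
    rw [← div_le_iff₀ hε0]
    exact Nat.le_ceil _
  have hn2 : t₀ + n * ε ≤ T + 1 := by
    have h0 : (0 : ℝ) ≤ (T - t₀) / ε := div_nonneg (by linarith) hε0.le
    have := Nat.ceil_lt_add_one h0
    have h2 : (n : ℝ) * ε < ((T - t₀) / ε + 1) * ε := by
      apply mul_lt_mul_of_pos_right _ hε0
      exact_mod_cast this
    rw [add_mul, div_mul_cancel₀ _ (ne_of_gt hε0)] at h2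
    linarith
  obtain ⟨f, hf0, hfd⟩ := main n hn2
  refine ⟨f, hf0, fun t ht => ?_⟩
  have htm : t ∈ Icc (t₀ - ε) (t₀ + n * ε + ε) := ⟨by linarith [ht.1], by linarith [ht.2, hn1]⟩
  exact (hfd t htm).hasDerivAt (Icc_mem_nhds (by linarith [ht.1]) (by linarith [ht.2, hn1]))

end


/-- Global existence, uniqueness and positivity for the Lotka–Volterra system: for any
`t₀ ≥ 0` and initial value `y₀` in the closed nonnegative quadrant, there is a solution
`y` of `y' = c(y)` on `[t₀,∞)` with `y(t₀) = y₀`, taking values in the quadrant, and any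
other solution with the same initial value coincides with it on `[t₀,∞)`. -/
theorem lotkaVolterra_existence_uniqueness
    (r₁ r₂ β₁ β₂ l₁₁ l₁₂ l₂₁ l₂₂ : ℝ)
    (hβ₁ : 0 < β₁) (hβ₂ : 0 < β₂)
    (hl₁₁ : 0 ≤ l₁₁) (hl₁₂ : 0 ≤ l₁₂) (hl₂₁ : 0 ≤ l₂₁) (hl₂₂ : 0 ≤ l₂₂)
    (t₀ : ℝ) (ht₀ : 0 ≤ t₀)
    (y₀ : ℝ × ℝ) (hy₀ : 0 ≤ y₀.1 ∧ 0 ≤ y₀.2) :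
    ∃ y : ℝ → ℝ × ℝ,
      y t₀ = y₀ ∧
      (∀ t : ℝ, t₀ ≤ t →
        HasDerivAt y (LVfield r₁ r₂ β₁ β₂ l₁₁ l₁₂ l₂₁ l₂₂ (y t)) t) ∧
      (∀ t : ℝ, t₀ ≤ t → 0 ≤ (y t).1 ∧ 0 ≤ (y t).2) ∧
      (∀ z : ℝ → ℝ × ℝ, z t₀ = y₀ →
        (∀ t : ℝ, t₀ ≤ t →
          HasDerivAt z (LVfield r₁ r₂ β₁ β₂ l₁₁ l₁₂ l₂₁ l₂₂ (z t)) t) →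
        ∀ t : ℝ, t₀ ≤ t → z t = y t) := by
  have hex : ∀ T : ℝ, ∃ f : ℝ → ℝ × ℝ, f t₀ = y₀ ∧
      ∀ t ∈ Icc t₀ (max T t₀), HasDerivAt f (LVfield r₁ r₂ β₁ β₂ l₁₁ l₁₂ l₂₁ l₂₂ (f t)) t :=
    fun T => LV_exists_on hβ₁ hβ₂ hl₁₁ hl₁₂ hl₂₁ hl₂₂ hy₀ (le_max_right T t₀)
  choose g hg0 hgd using hex
  have hcons : ∀ (T T' s : ℝ), t₀ ≤ s → s ≤ max T t₀ → s ≤ max T' t₀ → g T s = g T' s := by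
    intro T T' s hs h1 h2
    exact LV_unique
      (fun u hu => hgd T u ⟨hu.1, hu.2.trans h1⟩)
      (fun u hu => hgd T' u ⟨hu.1, hu.2.trans h2⟩)
      ((hg0 T).trans (hg0 T').symm) ⟨hs, le_rfl⟩
  set y : ℝ → ℝ × ℝ := fun t => g (max t t₀ + 1) t with hydef
  have hyt₀ : y t₀ = y₀ := by
    rw [hydef]
    exact hg0 _
  have hyval : ∀ t : ℝ, t₀ ≤ t → ∀ T, t ≤ max T t₀ → y t = g T t := by
    intro t ht T hT
    rw [hydef]
    apply hcons
    · exact ht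
    · apply le_max_of_le_left
      have : max t t₀ = t := max_eq_left ht
      linarith [this.ge, this.le]
    · exact hT
  have hyd : ∀ t : ℝ, t₀ ≤ t →
      HasDerivAt y (LVfield r₁ r₂ β₁ β₂ l₁₁ l₁₂ l₂₁ l₂₂ (y t)) t := by
    intro t ht
    set M := max t t₀ + 1 with hMdef
    have hM1 : t + 1 ≤ max M t₀ := by
      have : max t t₀ = t := max_eq_left ht
      rw [hMdef, this]
      exact le_max_left _ _
    have hgt : ∀ s : ℝ, t₀ < s → s < t + 1 → y s = g M s := by
      intro s h hs2
      have h1 : y s = g (s + 1) s := by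
        show g (s ⊔ t₀ + 1) s = _
        rw [max_eq_left h.le]
      rw [h1]
      apply hcons
      · exact h.le
      · exact le_max_of_le_left (by linarith)
      · exact le_trans (by linarith) hM1
    have hloc : y =ᶠ[nhds t] g M := by
      rcases eq_or_lt_of_le ht with he | hlt
      · -- t = t₀, so M = t₀ + 1
        have hMt : M = t₀ + 1 := by rw [hMdef, ← he, max_self]
        have hmem : Ioo (t₀ - 1) (t₀ + 1) ∈ nhds t := by
          rw [← he]
          exact Ioo_mem_nhds (by linarith) (by linarith)
        filter_upwards [hmem] with s hs
        rcases le_or_gt s t₀ with h | h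
        · have h1 : y s = g (t₀ + 1) s := by
            show g (s ⊔ t₀ + 1) s = _
            rw [max_eq_right h]
          rw [h1, hMt]
        · exact hgt s h (by rw [← he]; exact hs.2)
      · -- t > t₀
        have hmem : Ioo t₀ (t + 1) ∈ nhds t := Ioo_mem_nhds hlt (by linarith)
        filter_upwards [hmem] with s hs
        exact hgt s hs.1 hs.2
    have hder := hgd M t ⟨ht, by linarith [hM1]⟩
    have := hder.congr_of_eventuallyEq hloc
    have hyM : y t = g M t := hloc.eq_of_nhds
    rw [hyM]
    exact this
  refine ⟨y, hyt₀, hyd, ?_, ?_⟩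
  · intro t ht
    have hb := LV_bound hβ₁ hβ₂ hl₁₁ hl₁₂ hl₂₁ hl₂₂ ht
      (by rw [hyt₀]; exact hy₀)
      (fun u hu => (hyd u hu.1).hasDerivWithinAt)
    obtain ⟨⟨p1, _⟩, ⟨p2, _⟩⟩ := hb t ⟨ht, le_rfl⟩
    exact ⟨p1, p2⟩
  · intro z hz0 hzd t ht
    exact LV_unique
      (fun u hu => hzd u hu.1)
      (fun u hu => hyd u hu.1)
      (by rw [hz0, hyt₀]) ⟨ht, le_rfl⟩
end

section
/- Fix real parameters r₁, r₂ ∈ ℝ, β₁, β₂ > 0 and nonnegative λ₁₁, λ₁₂, λ₂₁, λ₂₂. Let y = (y₁, y₂) : [t₀,∞) → ℝ₊² be a solution of the Lotka–Volterra system, and for i ∈ {1,2} let zᵢ : [t₀,∞) → ℝ be the solution of the decoupled logistic equation zᵢ'(t) = rᵢ·zᵢ(t) − βᵢ·λ_{ii}·zᵢ(t)² with zᵢ(t₀) = yᵢ(t₀). Then yᵢ(t) ≤ zᵢ(t) for all t ≥ t₀ and i ∈ {1,2}. -/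
open Set intervalIntegral

/-- One-variable comparison: a subsolution of the logistic ODE stays below the solution. -/
theorem logistic_comparison (r β l : ℝ) (t₀ : ℝ) (y z c : ℝ → ℝ)
    (hy : ∀ t : ℝ, t₀ ≤ t →
      HasDerivAt y (r * y t - β * l * (y t) ^ 2 - c t) t)
    (hc : ∀ t : ℝ, t₀ ≤ t → 0 ≤ c t)
    (hz : ∀ t : ℝ, t₀ ≤ t → HasDerivAt z (r * z t - β * l * (z t) ^ 2) t)
    (h0 : z t₀ = y t₀) : ∀ t : ℝ, t₀ ≤ t → y t ≤ z t := by
  -- continuity of y and z on [t₀,∞)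
  have hyc : ContinuousOn y (Ici t₀) := fun t ht =>
    ((hy t ht).continuousAt).continuousWithinAt
  have hzc : ContinuousOn z (Ici t₀) := fun t ht =>
    ((hz t ht).continuousAt).continuousWithinAt
  -- a globally continuous version of g t = r - β*l*(y t + z t)
  set g : ℝ → ℝ := fun t => r - β * l * (y (max t t₀) + z (max t t₀)) with hg_def
  have hmax : Continuous fun t : ℝ => max t t₀ := continuous_id.max continuous_const
  have hgc : Continuous g := by
    have h1 : ContinuousOn (fun t => r - β * l * (y t + z t)) (Ici t₀) :=
      continuousOn_const.sub (continuousOn_const.mul (hyc.add hzc))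
    have := h1.comp_continuous hmax (fun t => mem_Ici.mpr (le_max_right _ _))
    exact this
  have hgeq : ∀ t : ℝ, t₀ ≤ t → g t = r - β * l * (y t + z t) := by
    intro t ht; simp [hg_def, max_eq_left ht]
  set G : ℝ → ℝ := fun t => ∫ s in t₀..t, g s with hG_def
  have hG : ∀ t : ℝ, HasDerivAt G (g t) t := by
    intro t
    exact integral_hasDerivAt_right (hgc.intervalIntegrable _ _)
      (hgc.stronglyMeasurableAtFilter _ _) hgc.continuousAt
  set F : ℝ → ℝ := fun t => (y t - z t) * Real.exp (-G t) with hF_def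
  have hF : ∀ t : ℝ, t₀ ≤ t → HasDerivAt F (-(c t) * Real.exp (-G t)) t := by
    intro t ht
    have hd := ((hy t ht).sub (hz t ht)).mul ((hG t).neg.exp)
    exact hd.congr_deriv (by rw [hgeq t ht]; simp only [Pi.sub_apply, Pi.neg_apply]; ring)
  have hFc : ContinuousOn F (Ici t₀) := fun t ht =>
    ((hF t ht).continuousAt).continuousWithinAt
  have hanti : AntitoneOn F (Ici t₀) := by
    apply antitoneOn_of_deriv_nonpos (convex_Ici t₀) hFc
    · intro t ht
      rw [interior_Ici] at ht
      exact (hF t (le_of_lt ht)).differentiableAt.differentiableWithinAt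
    · intro t ht
      rw [interior_Ici] at ht
      rw [(hF t (le_of_lt ht)).deriv]
      have := hc t (le_of_lt ht)
      have := Real.exp_pos (-G t)
      nlinarith
  intro t ht
  have h1 : F t ≤ F t₀ := hanti self_mem_Ici ht ht
  have h2 : F t₀ = 0 := by simp [hF_def, h0]
  rw [h2] at h1
  simp only [hF_def] at h1
  have h3 : 0 < Real.exp (-G t) := Real.exp_pos _
  nlinarith [h1]

/-- Comparison of a Lotka–Volterra solution with the decoupled logistic equations:
if `y = (y₁, y₂) : [t₀,∞) → ℝ₊²` solves the Lotka–Volterra system and, for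
`i ∈ {1,2}`, `zᵢ` solves `zᵢ' = rᵢ·zᵢ − βᵢ·λ_{ii}·zᵢ²` with `zᵢ(t₀) = yᵢ(t₀)`,
then `yᵢ(t) ≤ zᵢ(t)` for all `t ≥ t₀`. -/

theorem lotkaVolterra_logistic_domination
    (r₁ r₂ β₁ β₂ l₁₁ l₁₂ l₂₁ l₂₂ : ℝ)
    (hβ₁ : 0 < β₁) (hβ₂ : 0 < β₂)
    (hl₁₁ : 0 ≤ l₁₁) (hl₁₂ : 0 ≤ l₁₂) (hl₂₁ : 0 ≤ l₂₁) (hl₂₂ : 0 ≤ l₂₂)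
    (t₀ : ℝ) (y₁ y₂ z₁ z₂ : ℝ → ℝ)
    (hderiv₁ : ∀ t : ℝ, t₀ ≤ t →
      HasDerivAt y₁ (y₁ t * (r₁ - β₁ * (l₁₁ * y₁ t + l₁₂ * y₂ t))) t)
    (hderiv₂ : ∀ t : ℝ, t₀ ≤ t →
      HasDerivAt y₂ (y₂ t * (r₂ - β₂ * (l₂₁ * y₁ t + l₂₂ * y₂ t))) t)
    (hquad : ∀ t : ℝ, t₀ ≤ t → 0 ≤ y₁ t ∧ 0 ≤ y₂ t)
    (hz₁ : ∀ t : ℝ, t₀ ≤ t →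
      HasDerivAt z₁ (r₁ * z₁ t - β₁ * l₁₁ * (z₁ t) ^ 2) t)
    (hz₂ : ∀ t : ℝ, t₀ ≤ t →
      HasDerivAt z₂ (r₂ * z₂ t - β₂ * l₂₂ * (z₂ t) ^ 2) t)
    (hz₁0 : z₁ t₀ = y₁ t₀) (hz₂0 : z₂ t₀ = y₂ t₀) :
    ∀ t : ℝ, t₀ ≤ t → y₁ t ≤ z₁ t ∧ y₂ t ≤ z₂ t := by
  intro t ht
  constructor
  · refine logistic_comparison r₁ β₁ l₁₁ t₀ y₁ z₁
      (fun s => β₁ * l₁₂ * y₁ s * y₂ s) ?_ ?_ hz₁ hz₁0 t ht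
    · intro s hs
      convert hderiv₁ s hs using 1
      ring
    · intro s hs
      obtain ⟨h1, h2⟩ := hquad s hs
      positivity
  · refine logistic_comparison r₂ β₂ l₂₂ t₀ y₂ z₂
      (fun s => β₂ * l₂₁ * y₁ s * y₂ s) ?_ ?_ hz₂ hz₂0 t ht
    · intro s hs
      convert hderiv₂ s hs using 1
      ring
    · intro s hs
      obtain ⟨h1, h2⟩ := hquad s hs
      positivity
end

section
/- Fix real parameters r₁, r₂ ∈ ℝ, β₁, β₂ > 0 and nonnegative λ₁₁, λ₁₂, λ₂₁, λ₂₂ with λ₁₁ > 0 and λ₂₂ > 0. Then every solution y : [t₀,∞) → ℝ₊² of the Lotka–Volterra system is bounded: sup_{t ≥ t₀} (y₁(t) + y₂(t)) < ∞. -/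
lemma bound_of_deriv_neg (a K : ℝ) (f f' : ℝ → ℝ)
    (hd : ∀ t, a ≤ t → HasDerivAt f (f' t) t)
    (h0 : f a ≤ K)
    (hneg : ∀ t, a ≤ t → K < f t → f' t < 0) :
    ∀ t, a ≤ t → f t ≤ K := by
  intro b hb
  by_contra hfb
  push_neg at hfb
  have hab : a < b := by
    rcases lt_or_eq_of_le hb with h | h
    · exact h
    · exfalso; rw [h] at h0; linarith
  have hcont : ContinuousOn f (Set.Icc a b) := fun t ht =>
    ((hd t ht.1).continuousAt).continuousWithinAt
  set S := Set.Icc a b ∩ f ⁻¹' Set.Iic K with hS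
  have hSne : S.Nonempty := ⟨a, ⟨le_refl a, le_of_lt hab⟩, h0⟩
  have hSbdd : BddAbove S := ⟨b, fun x hx => hx.1.2⟩
  have hSclosed : IsClosed S :=
    hcont.preimage_isClosed_of_isClosed isClosed_Icc isClosed_Iic
  set c := sSup S with hc
  have hcmem : c ∈ S := hSclosed.csSup_mem hSne hSbdd
  have hca : a ≤ c := hcmem.1.1
  have hcb : c ≤ b := hcmem.1.2
  have hfc : f c ≤ K := hcmem.2
  have hcltb : c < b := lt_of_le_of_ne hcb (by intro h; rw [h] at hfc; linarith)
  have hgt : ∀ t ∈ Set.Ioo c b, K < f t := by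
    intro t ht
    by_contra h
    push_neg at h
    have : t ∈ S := ⟨⟨le_trans hca ht.1.le, ht.2.le⟩, h⟩
    have := le_csSup hSbdd this
    linarith [ht.1]
  have hanti : StrictAntiOn f (Set.Icc c b) := by
    apply strictAntiOn_of_deriv_neg (convex_Icc c b)
      (hcont.mono (Set.Icc_subset_Icc_left hca))
    intro x hx
    rw [interior_Icc] at hx
    rw [(hd x (le_trans hca hx.1.le)).deriv]
    exact hneg x (le_trans hca hx.1.le) (hgt x hx)
  have := hanti ⟨le_refl c, hcb⟩ ⟨hcb, le_refl b⟩ hcltb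
  linarith

/-- Boundedness of Lotka–Volterra solutions: with `β₁, β₂ > 0`, `λ₁₁, λ₂₂ > 0` and
`λ₁₂, λ₂₁ ≥ 0`, every solution `y = (y₁, y₂) : [t₀,∞) → ℝ₊²` of the Lotka–Volterra
system is bounded: `sup_{t ≥ t₀} (y₁(t) + y₂(t)) < ∞`. -/
theorem lotkaVolterra_solutions_bounded
    (r₁ r₂ β₁ β₂ l₁₁ l₁₂ l₂₁ l₂₂ : ℝ)
    (hβ₁ : 0 < β₁) (hβ₂ : 0 < β₂)
    (hl₁₁ : 0 < l₁₁) (hl₁₂ : 0 ≤ l₁₂) (hl₂₁ : 0 ≤ l₂₁) (hl₂₂ : 0 < l₂₂)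
    (t₀ : ℝ) (y₁ y₂ : ℝ → ℝ)
    (hderiv₁ : ∀ t : ℝ, t₀ ≤ t →
      HasDerivAt y₁ (y₁ t * (r₁ - β₁ * (l₁₁ * y₁ t + l₁₂ * y₂ t))) t)
    (hderiv₂ : ∀ t : ℝ, t₀ ≤ t →
      HasDerivAt y₂ (y₂ t * (r₂ - β₂ * (l₂₁ * y₁ t + l₂₂ * y₂ t))) t)
    (hquad : ∀ t : ℝ, t₀ ≤ t → 0 ≤ y₁ t ∧ 0 ≤ y₂ t) :
    ∃ M : ℝ, ∀ t : ℝ, t₀ ≤ t → y₁ t + y₂ t ≤ M := by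
  have hy₁0 : 0 ≤ y₁ t₀ := (hquad t₀ le_rfl).1
  have hy₂0 : 0 ≤ y₂ t₀ := (hquad t₀ le_rfl).2
  set K₁ := max (y₁ t₀) (r₁ / (β₁ * l₁₁)) with hK₁
  set K₂ := max (y₂ t₀) (r₂ / (β₂ * l₂₂)) with hK₂
  have hb₁ : ∀ t, t₀ ≤ t → y₁ t ≤ K₁ := by
    apply bound_of_deriv_neg t₀ K₁ y₁ _ hderiv₁ (le_max_left _ _)
    intro t ht hgt
    have hy1pos : 0 < y₁ t := lt_of_le_of_lt (le_trans hy₁0 (le_max_left _ _)) hgt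
    have h1 : r₁ / (β₁ * l₁₁) < y₁ t := lt_of_le_of_lt (le_max_right _ _) hgt
    have hβl : 0 < β₁ * l₁₁ := mul_pos hβ₁ hl₁₁
    have h2 : r₁ < β₁ * l₁₁ * y₁ t := (div_lt_iff₀' hβl).mp h1
    have hy2 : 0 ≤ y₂ t := (hquad t ht).2
    have : r₁ - β₁ * (l₁₁ * y₁ t + l₁₂ * y₂ t) < 0 := by nlinarith [mul_nonneg (mul_nonneg hβ₁.le hl₁₂) hy2]
    exact mul_neg_of_pos_of_neg hy1pos this
  have hb₂ : ∀ t, t₀ ≤ t → y₂ t ≤ K₂ := by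
    apply bound_of_deriv_neg t₀ K₂ y₂ _ hderiv₂ (le_max_left _ _)
    intro t ht hgt
    have hy2pos : 0 < y₂ t := lt_of_le_of_lt (le_trans hy₂0 (le_max_left _ _)) hgt
    have h1 : r₂ / (β₂ * l₂₂) < y₂ t := lt_of_le_of_lt (le_max_right _ _) hgt
    have hβl : 0 < β₂ * l₂₂ := mul_pos hβ₂ hl₂₂
    have h2 : r₂ < β₂ * l₂₂ * y₂ t := (div_lt_iff₀' hβl).mp h1
    have hy1 : 0 ≤ y₁ t := (hquad t ht).1
    have : r₂ - β₂ * (l₂₁ * y₁ t + l₂₂ * y₂ t) < 0 := by nlinarith [mul_nonneg (mul_nonneg hβ₂.le hl₂₁) hy1]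
    exact mul_neg_of_pos_of_neg hy2pos this
  exact ⟨K₁ + K₂, fun t ht => add_le_add (hb₁ t ht) (hb₂ t ht)⟩
end

section
/- Fix real parameters r₁, r₂ > 0, β₁, β₂ > 0 and nonnegative λ₁₁, λ₁₂, λ₂₁, λ₂₂ with λ₁₁ > 0 and λ₂₂ > 0, and assume the competitive-exclusion conditions: r₂β₁λ₁₁ < r₁β₂λ₂₁ and r₁β₂λ₂₂ > r₂β₁λ₁₂. Then every solution y : [t₀,∞) → ℝ₊² of the Lotka–Volterra system with y₁(t₀) > 0 converges, as t → ∞, to the boundary equilibrium (r₁/(β₁λ₁₁), 0). -/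
open Filter Set

/-- If `f` has derivative `F` on `[a,b]` and `F ≤ 0` on the interior, then `f b ≤ f a`. -/
lemma lv_deriv_aux {f F : ℝ → ℝ} {a b : ℝ} (hab : a ≤ b)
    (hf : ∀ t ∈ Icc a b, HasDerivAt f (F t) t)
    (hF : ∀ t ∈ Ioo a b, F t ≤ 0) : f b ≤ f a := by
  have hcont : ContinuousOn f (Icc a b) := fun t ht =>
    (hf t ht).continuousAt.continuousWithinAt
  have hint : interior (Icc a b) = Ioo a b := interior_Icc
  have hdiff : DifferentiableOn ℝ f (interior (Icc a b)) := by
    rw [hint]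
    exact fun t ht => ((hf t (Ioo_subset_Icc_self ht)).differentiableAt).differentiableWithinAt
  have hder : ∀ x ∈ interior (Icc a b), deriv f x ≤ 0 := by
    rw [hint]
    intro x hx
    rw [(hf x (Ioo_subset_Icc_self hx)).deriv]
    exact hF x hx
  exact antitoneOn_of_deriv_nonpos (convex_Icc a b) hcont hdiff hder
    (left_mem_Icc.2 hab) (right_mem_Icc.2 hab) hab

/-- Forward invariance of `{f ≤ θ}`. -/
lemma lv_inv_upper {f F : ℝ → ℝ} {a θ : ℝ}
    (hf : ∀ t ∈ Ici a, HasDerivAt f (F t) t)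
    (hF : ∀ t ∈ Ici a, θ ≤ f t → F t ≤ 0)
    (h0 : f a ≤ θ) : ∀ t ∈ Ici a, f t ≤ θ := by
  intro t₁ ht₁
  by_contra hcon
  push_neg at hcon
  set S : Set ℝ := Icc a t₁ ∩ f ⁻¹' (Iic θ) with hS
  have hSsub : S ⊆ Icc a t₁ := inter_subset_left
  have hSne : S.Nonempty := ⟨a, ⟨left_mem_Icc.2 ht₁, h0⟩⟩
  have hcont : ContinuousOn f (Icc a t₁) := fun t ht =>
    (hf t (Icc_subset_Ici_self ht)).continuousAt.continuousWithinAt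
  have hSclosed : IsClosed S :=
    hcont.preimage_isClosed_of_isClosed isClosed_Icc isClosed_Iic
  have hScomp : IsCompact S := isCompact_Icc.of_isClosed_subset hSclosed hSsub
  have hsmem : sSup S ∈ S := hScomp.sSup_mem hSne
  set s := sSup S with hs
  have hsa : a ≤ s := (hSsub hsmem).1
  have hst : s ≤ t₁ := (hSsub hsmem).2
  have hfs : f s ≤ θ := hsmem.2
  have hgt : ∀ t ∈ Ioc s t₁, θ < f t := by
    intro t ht
    by_contra hle
    push_neg at hle
    have : t ∈ S := ⟨⟨hsa.trans ht.1.le, ht.2⟩, hle⟩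
    exact absurd (le_csSup hScomp.bddAbove this) (not_le.2 ht.1)
  have := lv_deriv_aux hst
    (fun t ht => hf t (le_trans hsa ht.1))
    (fun t ht => hF t (le_trans hsa ht.1.le) (hgt t ⟨ht.1, ht.2.le⟩).le)
  exact absurd (this.trans hfs) (not_le.2 hcon)

lemma lv_inv_lower {f F : ℝ → ℝ} {a θ : ℝ}
    (hf : ∀ t ∈ Ici a, HasDerivAt f (F t) t)
    (hF : ∀ t ∈ Ici a, f t ≤ θ → 0 ≤ F t)
    (h0 : θ ≤ f a) : ∀ t ∈ Ici a, θ ≤ f t := by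
  have := lv_inv_upper (f := fun t => -f t) (F := fun t => -F t) (a := a) (θ := -θ)
    (fun t ht => (hf t ht).neg)
    (fun t ht h => by
      simpa using hF t ht (by linarith))
    (by show -f a ≤ -θ; linarith)
  intro t ht
  have h2 := this t ht
  linarith

/-- Exponential comparison: if `F t ≤ -ε * f t` then `f t ≤ f a * exp (-ε (t - a))`. -/
lemma lv_exp_decay {f F : ℝ → ℝ} {a : ℝ} (ε : ℝ)
    (hf : ∀ t ∈ Ici a, HasDerivAt f (F t) t)
    (hF : ∀ t ∈ Ici a, F t ≤ -ε * f t) :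
    ∀ t ∈ Ici a, f t ≤ f a * Real.exp (-ε * (t - a)) := by
  intro t ht
  have key : f t * Real.exp (ε * t) ≤ f a * Real.exp (ε * a) := by
    apply lv_deriv_aux ht (F := fun s => F s * Real.exp (ε * s) + f s * (Real.exp (ε * s) * ε))
    · intro s hs
      have hlin : HasDerivAt (fun y : ℝ => ε * y) ε s := by
        simpa using (hasDerivAt_id s).const_mul ε
      have h1 : HasDerivAt (fun s : ℝ => Real.exp (ε * s)) (Real.exp (ε * s) * ε) s :=
        hlin.exp
      exact (hf s hs.1).mul h1
    · intro s hs
      have h2 := hF s hs.1.le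
      have h3 : 0 < Real.exp (ε * s) := Real.exp_pos _
      nlinarith
  have h4 : 0 < Real.exp (ε * t) := Real.exp_pos _
  have h5 : f a * Real.exp (ε * a) * Real.exp (-(ε * t)) = f a * Real.exp (-ε * (t - a)) := by
    rw [mul_assoc, ← Real.exp_add]; ring_nf
  calc f t = f t * Real.exp (ε * t) * Real.exp (-(ε * t)) := by
        rw [mul_assoc, ← Real.exp_add]; simp
    _ ≤ f a * Real.exp (ε * a) * Real.exp (-(ε * t)) := by
        apply mul_le_mul_of_nonneg_right key (Real.exp_pos _).le
    _ = f a * Real.exp (-ε * (t - a)) := h5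

lemma lv_exp_growth {f F : ℝ → ℝ} {a : ℝ} (k : ℝ)
    (hf : ∀ t ∈ Ici a, HasDerivAt f (F t) t)
    (hF : ∀ t ∈ Ici a, k * f t ≤ F t) :
    ∀ t ∈ Ici a, f a * Real.exp (k * (t - a)) ≤ f t := by
  intro t ht
  have := lv_exp_decay (f := fun t => -f t) (F := fun t => -F t) (a := a) (-k)
    (fun t ht => (hf t ht).neg)
    (fun t ht => by have := hF t ht; ring_nf; linarith)
    t ht
  simp only [neg_neg] at this
  linarith

/-- Linear decrease: if `F t ≤ -m` then `f t ≤ f a - m * (t - a)`. -/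
lemma lv_lin_decrease {f F : ℝ → ℝ} {a m : ℝ}
    (hf : ∀ t ∈ Ici a, HasDerivAt f (F t) t)
    (hF : ∀ t ∈ Ici a, F t ≤ -m) :
    ∀ t ∈ Ici a, f t ≤ f a - m * (t - a) := by
  intro t ht
  have key : f t + m * t ≤ f a + m * a := by
    apply lv_deriv_aux ht (F := fun s => F s + m)
    · intro s hs
      have hlin : HasDerivAt (fun y : ℝ => m * y) m s := by
        simpa using (hasDerivAt_id s).const_mul m
      exact (hf s hs.1).add hlin
    · intro s hs
      have := hF s hs.1.le
      linarith
  linarith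

set_option maxHeartbeats 1000000 in
/-- Competitive exclusion for the Lotka–Volterra system: with `r₁, r₂ > 0`,
`β₁, β₂ > 0`, `λ₁₁, λ₂₂ > 0`, `λ₁₂, λ₂₁ ≥ 0`, and under the exclusion conditions
`r₂β₁λ₁₁ < r₁β₂λ₂₁` and `r₁β₂λ₂₂ > r₂β₁λ₁₂`, every solution in the nonnegative
quadrant with `y₁(t₀) > 0` converges, as `t → ∞`, to the boundary equilibrium
`(r₁/(β₁λ₁₁), 0)`. -/
theorem lotkaVolterra_competitive_exclusion
    (r₁ r₂ β₁ β₂ l₁₁ l₁₂ l₂₁ l₂₂ : ℝ)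
    (hr₁ : 0 < r₁) (hr₂ : 0 < r₂) (hβ₁ : 0 < β₁) (hβ₂ : 0 < β₂)
    (hl₁₁ : 0 < l₁₁) (hl₁₂ : 0 ≤ l₁₂) (hl₂₁ : 0 ≤ l₂₁) (hl₂₂ : 0 < l₂₂)
    (hexcl₁ : r₂ * β₁ * l₁₁ < r₁ * β₂ * l₂₁)
    (hexcl₂ : r₂ * β₁ * l₁₂ < r₁ * β₂ * l₂₂) :
    ∀ (t₀ : ℝ) (y₁ y₂ : ℝ → ℝ),
      (∀ t : ℝ, t₀ ≤ t →
        HasDerivAt y₁ (y₁ t * (r₁ - β₁ * (l₁₁ * y₁ t + l₁₂ * y₂ t))) t) →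
      (∀ t : ℝ, t₀ ≤ t →
        HasDerivAt y₂ (y₂ t * (r₂ - β₂ * (l₂₁ * y₁ t + l₂₂ * y₂ t))) t) →
      (∀ t : ℝ, t₀ ≤ t → 0 ≤ y₁ t ∧ 0 ≤ y₂ t) →
      0 < y₁ t₀ →
      Tendsto (fun t => (y₁ t, y₂ t)) atTop (nhds (r₁ / (β₁ * l₁₁), 0)) := by
  intro t₀ y₁ y₂ hd₁ hd₂ hpos h10
  have hd₁' : ∀ t ∈ Ici t₀,
      HasDerivAt y₁ (y₁ t * (r₁ - β₁ * (l₁₁ * y₁ t + l₁₂ * y₂ t))) t := fun t ht => hd₁ t ht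
  have hd₂' : ∀ t ∈ Ici t₀,
      HasDerivAt y₂ (y₂ t * (r₂ - β₂ * (l₂₁ * y₁ t + l₂₂ * y₂ t))) t := fun t ht => hd₂ t ht
  have hy₁0 : ∀ t ∈ Ici t₀, 0 ≤ y₁ t := fun t ht => (hpos t ht).1
  have hy₂0 : ∀ t ∈ Ici t₀, 0 ≤ y₂ t := fun t ht => (hpos t ht).2
  set K : ℝ := r₁ / (β₁ * l₁₁) with hKdef
  have hβl : 0 < β₁ * l₁₁ := mul_pos hβ₁ hl₁₁
  have hK0 : 0 < K := div_pos hr₁ hβl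
  have hKr : β₁ * l₁₁ * K = r₁ := by
    rw [hKdef]; field_simp
  -- upper bound for y₁
  set M₁ : ℝ := max (y₁ t₀) K with hM₁def
  have hM₁pos : 0 < M₁ := lt_max_of_lt_right hK0
  have hM₁ : ∀ t ∈ Ici t₀, y₁ t ≤ M₁ := by
    apply lv_inv_upper hd₁' _ (le_max_left _ _)
    intro t ht hge
    have h1 := hy₁0 t ht
    have h2 := hy₂0 t ht
    have hKle : K ≤ y₁ t := le_trans (le_max_right _ _) hge
    have hA : 0 ≤ y₁ t * (β₁ * l₁₁ * (y₁ t - K)) :=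
      mul_nonneg h1 (mul_nonneg hβl.le (by linarith))
    have hB : 0 ≤ y₁ t * (β₁ * (l₁₂ * y₂ t)) :=
      mul_nonneg h1 (mul_nonneg hβ₁.le (mul_nonneg hl₁₂ h2))
    nlinarith [hKr]
  -- upper bound for y₂
  set M₂ : ℝ := max (y₂ t₀) (r₂ / (β₂ * l₂₂)) with hM₂def
  have hβl₂ : 0 < β₂ * l₂₂ := mul_pos hβ₂ hl₂₂
  have hM₂ : ∀ t ∈ Ici t₀, y₂ t ≤ M₂ := by
    apply lv_inv_upper hd₂' _ (le_max_left _ _)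
    intro t ht hge
    have h1 := hy₁0 t ht
    have h2 := hy₂0 t ht
    have hKle : r₂ / (β₂ * l₂₂) ≤ y₂ t := le_trans (le_max_right _ _) hge
    have hK2 : r₂ ≤ β₂ * l₂₂ * y₂ t := by
      rw [div_le_iff₀ hβl₂] at hKle; linarith
    have hA : 0 ≤ y₂ t * (β₂ * l₂₂ * y₂ t - r₂) := mul_nonneg h2 (by linarith)
    have hB : 0 ≤ y₂ t * (β₂ * (l₂₁ * y₁ t)) :=
      mul_nonneg h2 (mul_nonneg hβ₂.le (mul_nonneg hl₂₁ h1))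
    nlinarith
  -- positivity of y₁
  set C : ℝ := β₁ * (l₁₁ * M₁ + l₁₂ * M₂) with hCdef
  have hClb : ∀ t ∈ Ici t₀,
      (-C) * y₁ t ≤ y₁ t * (r₁ - β₁ * (l₁₁ * y₁ t + l₁₂ * y₂ t)) := by
    intro t ht
    have h1 := hy₁0 t ht
    have h2 := hy₂0 t ht
    have hb1 := hM₁ t ht
    have hb2 := hM₂ t ht
    have hA : 0 ≤ y₁ t * (β₁ * (l₁₁ * (M₁ - y₁ t))) :=
      mul_nonneg h1 (mul_nonneg hβ₁.le (mul_nonneg hl₁₁.le (by linarith)))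
    have hB : 0 ≤ y₁ t * (β₁ * (l₁₂ * (M₂ - y₂ t))) :=
      mul_nonneg h1 (mul_nonneg hβ₁.le (mul_nonneg hl₁₂ (by linarith)))
    nlinarith [mul_nonneg h1 hr₁.le]
  have hy₁pos : ∀ t ∈ Ici t₀, 0 < y₁ t := by
    intro t ht
    have hgrow := lv_exp_growth (-C) hd₁' hClb t ht
    have hexp : 0 < Real.exp (-C * (t - t₀)) := Real.exp_pos _
    nlinarith
  -- choose the Lyapunov exponent c
  obtain ⟨c, hc0, hcr, hc1, hc2⟩ :
      ∃ c : ℝ, 0 < c ∧ r₂ < c * r₁ ∧ c * (β₁ * l₁₁) ≤ β₂ * l₂₁ ∧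
        c * (β₁ * l₁₂) ≤ β₂ * l₂₂ := by
    have hd₁' : r₂ / r₁ < β₂ * l₂₁ / (β₁ * l₁₁) := by
      rw [div_lt_div_iff₀ hr₁ hβl]
      nlinarith
    have hrr : 0 < r₂ / r₁ := div_pos hr₂ hr₁
    rcases eq_or_lt_of_le hl₁₂ with h0 | h0
    · refine ⟨(r₂ / r₁ + β₂ * l₂₁ / (β₁ * l₁₁)) / 2, by linarith, ?_, ?_, ?_⟩
      · rw [← div_lt_iff₀ hr₁]; linarith
      · have hle : (r₂ / r₁ + β₂ * l₂₁ / (β₁ * l₁₁)) / 2 ≤ β₂ * l₂₁ / (β₁ * l₁₁) := by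
          linarith
        calc (r₂ / r₁ + β₂ * l₂₁ / (β₁ * l₁₁)) / 2 * (β₁ * l₁₁)
            ≤ β₂ * l₂₁ / (β₁ * l₁₁) * (β₁ * l₁₁) :=
              mul_le_mul_of_nonneg_right hle hβl.le
          _ = β₂ * l₂₁ := by field_simp
      · rw [← h0]; simp; positivity
    · have hβl₃ : 0 < β₁ * l₁₂ := mul_pos hβ₁ h0
      have hd₂' : r₂ / r₁ < β₂ * l₂₂ / (β₁ * l₁₂) := by
        rw [div_lt_div_iff₀ hr₁ hβl₃]
        nlinarith
      refine ⟨min ((r₂ / r₁ + β₂ * l₂₁ / (β₁ * l₁₁)) / 2) (β₂ * l₂₂ / (β₁ * l₁₂)),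
        lt_min (by linarith) (by linarith), ?_, ?_, ?_⟩
      · rw [← div_lt_iff₀ hr₁]
        exact lt_min (by linarith) (by linarith)
      · have hle : min ((r₂ / r₁ + β₂ * l₂₁ / (β₁ * l₁₁)) / 2) (β₂ * l₂₂ / (β₁ * l₁₂))
            ≤ β₂ * l₂₁ / (β₁ * l₁₁) := (min_le_left _ _).trans (by linarith)
        calc _ ≤ β₂ * l₂₁ / (β₁ * l₁₁) * (β₁ * l₁₁) :=
              mul_le_mul_of_nonneg_right hle hβl.le
          _ = β₂ * l₂₁ := by field_simp
      · have hle : min ((r₂ / r₁ + β₂ * l₂₁ / (β₁ * l₁₁)) / 2) (β₂ * l₂₂ / (β₁ * l₁₂))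
            ≤ β₂ * l₂₂ / (β₁ * l₁₂) := min_le_right _ _
        calc _ ≤ β₂ * l₂₂ / (β₁ * l₁₂) * (β₁ * l₁₂) :=
              mul_le_mul_of_nonneg_right hle hβl₃.le
          _ = β₂ * l₂₂ := by field_simp
  set ε : ℝ := c * r₁ - r₂ with hεdef
  have hε : 0 < ε := by simp only [hεdef]; linarith
  -- the Lyapunov function W = y₂ * y₁ ^ (-c)
  set W : ℝ → ℝ := fun t => y₂ t * y₁ t ^ (-c) with hWdef
  have hW0 : ∀ t ∈ Ici t₀, 0 ≤ W t := fun t ht =>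
    mul_nonneg (hy₂0 t ht) (Real.rpow_nonneg (hy₁0 t ht) _)
  have hWd : ∀ t ∈ Ici t₀, HasDerivAt W
      (y₂ t * (r₂ - β₂ * (l₂₁ * y₁ t + l₂₂ * y₂ t)) * y₁ t ^ (-c)
        + y₂ t * (y₁ t * (r₁ - β₁ * (l₁₁ * y₁ t + l₁₂ * y₂ t)) * (-c) *
            y₁ t ^ (-c - 1))) t := by
    intro t ht
    exact (hd₂' t ht).mul ((hd₁' t ht).rpow_const (Or.inl (ne_of_gt (hy₁pos t ht))))
  have hWineq : ∀ t ∈ Ici t₀,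
      y₂ t * (r₂ - β₂ * (l₂₁ * y₁ t + l₂₂ * y₂ t)) * y₁ t ^ (-c)
        + y₂ t * (y₁ t * (r₁ - β₁ * (l₁₁ * y₁ t + l₁₂ * y₂ t)) * (-c) *
            y₁ t ^ (-c - 1)) ≤ -ε * W t := by
    intro t ht
    have hx : y₁ t ^ (-c - 1) * y₁ t = y₁ t ^ (-c) := by
      rw [← Real.rpow_add_one (ne_of_gt (hy₁pos t ht)) (-c - 1)]
      norm_num
    have heq : y₂ t * (r₂ - β₂ * (l₂₁ * y₁ t + l₂₂ * y₂ t)) * y₁ t ^ (-c)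
        + y₂ t * (y₁ t * (r₁ - β₁ * (l₁₁ * y₁ t + l₁₂ * y₂ t)) * (-c) *
            y₁ t ^ (-c - 1))
        = W t * ((r₂ - β₂ * (l₂₁ * y₁ t + l₂₂ * y₂ t))
            - c * (r₁ - β₁ * (l₁₁ * y₁ t + l₁₂ * y₂ t))) := by
      rw [hWdef]
      simp only
      linear_combination (-c * y₂ t * (r₁ - β₁ * (l₁₁ * y₁ t + l₁₂ * y₂ t))) * hx
    rw [heq]
    have hbound : (r₂ - β₂ * (l₂₁ * y₁ t + l₂₂ * y₂ t))
        - c * (r₁ - β₁ * (l₁₁ * y₁ t + l₁₂ * y₂ t)) ≤ -ε := by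
      have h1 := hy₁0 t ht
      have h2 := hy₂0 t ht
      have hA : 0 ≤ (β₂ * l₂₁ - c * (β₁ * l₁₁)) * y₁ t :=
        mul_nonneg (by linarith) h1
      have hB : 0 ≤ (β₂ * l₂₂ - c * (β₁ * l₁₂)) * y₂ t :=
        mul_nonneg (by linarith) h2
      simp only [hεdef]
      nlinarith
    calc W t * ((r₂ - β₂ * (l₂₁ * y₁ t + l₂₂ * y₂ t))
            - c * (r₁ - β₁ * (l₁₁ * y₁ t + l₁₂ * y₂ t)))
        ≤ W t * (-ε) := mul_le_mul_of_nonneg_left hbound (hW0 t ht)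
      _ = -ε * W t := by ring
  have hWdecay := lv_exp_decay ε hWd hWineq
  -- y₂ tends to 0
  have hy₂bd : ∀ t ∈ Ici t₀, y₂ t ≤ W t₀ * M₁ ^ c * Real.exp (-ε * (t - t₀)) := by
    intro t ht
    have hrec : y₂ t = W t * y₁ t ^ c := by
      rw [hWdef]
      simp only
      rw [mul_assoc, ← Real.rpow_add (hy₁pos t ht)]
      norm_num
    rw [hrec]
    have h1 : y₁ t ^ c ≤ M₁ ^ c := Real.rpow_le_rpow (hy₁0 t ht) (hM₁ t ht) hc0.le
    have h2 : W t * y₁ t ^ c ≤ W t * M₁ ^ c :=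
      mul_le_mul_of_nonneg_left h1 (hW0 t ht)
    have h3 : W t * M₁ ^ c ≤ (W t₀ * Real.exp (-ε * (t - t₀))) * M₁ ^ c :=
      mul_le_mul_of_nonneg_right (hWdecay t ht) (Real.rpow_nonneg hM₁pos.le _)
    calc W t * y₁ t ^ c ≤ (W t₀ * Real.exp (-ε * (t - t₀))) * M₁ ^ c := h2.trans h3
      _ = W t₀ * M₁ ^ c * Real.exp (-ε * (t - t₀)) := by ring
  have hy₂tendsto : Tendsto y₂ atTop (nhds 0) := by
    have hsub : Tendsto (fun t : ℝ => t - t₀) atTop atTop :=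
      tendsto_atTop_add_const_right _ _ tendsto_id
    have hlin : Tendsto (fun t : ℝ => -ε * (t - t₀)) atTop atBot :=
      (tendsto_const_mul_atBot_of_neg (by linarith)).2 hsub
    have hexp : Tendsto (fun t : ℝ => Real.exp (-ε * (t - t₀))) atTop (nhds 0) :=
      Real.tendsto_exp_atBot.comp hlin
    have hup : Tendsto (fun t : ℝ => W t₀ * M₁ ^ c * Real.exp (-ε * (t - t₀)))
        atTop (nhds 0) := by
      have := hexp.const_mul (W t₀ * M₁ ^ c)
      simpa using this
    apply tendsto_of_tendsto_of_tendsto_of_le_of_le' tendsto_const_nhds hup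
    · filter_upwards [eventually_ge_atTop t₀] with t ht using hy₂0 t ht
    · filter_upwards [eventually_ge_atTop t₀] with t ht using hy₂bd t ht
  -- eventual upper bound for y₁
  have hub : ∀ δ : ℝ, 0 < δ → ∀ᶠ t in atTop, y₁ t ≤ K + δ := by
    intro δ hδ
    have hexist : ∃ t₁, t₀ ≤ t₁ ∧ y₁ t₁ ≤ K + δ := by
      by_contra hcon
      push_neg at hcon
      set m : ℝ := (K + δ) * (β₁ * l₁₁ * δ) with hmdef
      have hm : 0 < m := mul_pos (by linarith) (mul_pos hβl hδ)
      have hlin : ∀ t ∈ Ici t₀,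
          y₁ t * (r₁ - β₁ * (l₁₁ * y₁ t + l₁₂ * y₂ t)) ≤ -m := by
        intro t ht
        have hgt := hcon t ht
        have h1 := hy₁0 t ht
        have h2 := hy₂0 t ht
        have hA : 0 ≤ y₁ t * (β₁ * (l₁₂ * y₂ t)) :=
          mul_nonneg h1 (mul_nonneg hβ₁.le (mul_nonneg hl₁₂ h2))
        have hB : (K + δ) * (β₁ * l₁₁ * δ) ≤ y₁ t * (β₁ * l₁₁ * (y₁ t - K)) := by
          have hy : K + δ ≤ y₁ t := hgt.le
          have h3 : β₁ * l₁₁ * δ ≤ β₁ * l₁₁ * (y₁ t - K) := by nlinarith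
          nlinarith [mul_pos hβl hδ]
        simp only [hmdef]
        nlinarith [hKr]
      set t : ℝ := t₀ + y₁ t₀ / m + 1 with htdef
      have htge : t₀ ≤ t := by
        have : 0 ≤ y₁ t₀ / m := div_nonneg (hy₁0 t₀ self_mem_Ici) hm.le
        simp only [htdef]; linarith
      have hdec := lv_lin_decrease hd₁' hlin t htge
      have h0 := hy₁0 t htge
      have hmt : m * (t - t₀) = y₁ t₀ + m := by
        simp only [htdef]
        field_simp
        ring
      nlinarith
    obtain ⟨t₁, ht₁0, ht₁⟩ := hexist
    have hinv := lv_inv_upper (a := t₁) (θ := K + δ)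
      (fun t ht => hd₁' t (le_trans ht₁0 ht))
      (fun t ht hge => by
        have h1 := hy₁0 t (le_trans ht₁0 ht)
        have h2 := hy₂0 t (le_trans ht₁0 ht)
        have hKy : K ≤ y₁ t := by linarith
        have hA : 0 ≤ y₁ t * (β₁ * l₁₁ * (y₁ t - K)) :=
          mul_nonneg h1 (mul_nonneg hβl.le (by linarith))
        have hB : 0 ≤ y₁ t * (β₁ * (l₁₂ * y₂ t)) :=
          mul_nonneg h1 (mul_nonneg hβ₁.le (mul_nonneg hl₁₂ h2))
        nlinarith [hKr])
      ht₁
    filter_upwards [eventually_ge_atTop t₁] with t ht using hinv t ht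
  -- eventual lower bound for y₁
  have hlb : ∀ δ : ℝ, 0 < δ → ∀ᶠ t in atTop, K - δ ≤ y₁ t := by
    intro δ hδ
    by_cases hKδ : K - δ ≤ 0
    · filter_upwards [eventually_ge_atTop t₀] with t ht using le_trans hKδ (hy₁0 t ht)
    · push_neg at hKδ
      set ε₂ : ℝ := l₁₁ * δ / (2 * (l₁₂ + 1)) with hε₂def
      have hl₁₂1 : 0 < l₁₂ + 1 := by linarith
      have hε₂ : 0 < ε₂ := by
        simp only [hε₂def]; positivity
      have hev : ∀ᶠ t in atTop, y₂ t < ε₂ ∧ t₀ ≤ t :=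
        (hy₂tendsto.eventually_lt_const hε₂).and (eventually_ge_atTop t₀)
      rw [eventually_atTop] at hev
      obtain ⟨T, hT⟩ := hev
      set T' : ℝ := max T t₀ with hT'def
      have hT't₀ : t₀ ≤ T' := le_max_right _ _
      set κ : ℝ := β₁ * l₁₁ * δ / 2 with hκdef
      have hκ : 0 < κ := by simp only [hκdef]; positivity
      have hcond : ∀ t ∈ Ici T', y₁ t ≤ K - δ →
          κ * y₁ t ≤ y₁ t * (r₁ - β₁ * (l₁₁ * y₁ t + l₁₂ * y₂ t)) := by
        intro t ht hle
        have htt₀ : t₀ ≤ t := le_trans hT't₀ ht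
        have h1 := hy₁0 t htt₀
        have h2 : y₂ t < ε₂ := (hT t (le_trans (le_max_left _ _) ht)).1
        have h2' := hy₂0 t htt₀
        have hl₂e : l₁₂ * y₂ t ≤ l₁₁ * δ / 2 := by
          have hstep : l₁₂ * y₂ t ≤ (l₁₂ + 1) * ε₂ := by
            nlinarith [mul_nonneg hl₁₂ (sub_nonneg.2 h2.le)]
          have heq2 : (l₁₂ + 1) * ε₂ = l₁₁ * δ / 2 := by
            simp only [hε₂def]
            field_simp
          linarith
        have hg : κ ≤ r₁ - β₁ * (l₁₁ * y₁ t + l₁₂ * y₂ t) := by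
          have hA : 0 ≤ β₁ * l₁₁ * ((K - δ) - y₁ t) :=
            mul_nonneg hβl.le (by linarith)
          have hB : 0 ≤ β₁ * (l₁₁ * δ / 2 - l₁₂ * y₂ t) :=
            mul_nonneg hβ₁.le (by linarith)
          simp only [hκdef]
          nlinarith [hKr]
        nlinarith [mul_le_mul_of_nonneg_left hg h1]
      have hexist : ∃ t₁, T' ≤ t₁ ∧ K - δ ≤ y₁ t₁ := by
        by_contra hcon
        push_neg at hcon
        have hgrow := lv_exp_growth κ (fun t ht => hd₁' t (le_trans hT't₀ ht))
          (fun t ht => hcond t ht (hcon t ht).le)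
        have hyT : 0 < y₁ T' := hy₁pos T' hT't₀
        set t : ℝ := T' + (K - δ) / (y₁ T' * κ) + 1 with htdef
        have htge : T' ≤ t := by
          have : 0 ≤ (K - δ) / (y₁ T' * κ) :=
            div_nonneg (by linarith) (mul_nonneg hyT.le hκ.le)
          simp only [htdef]; linarith
        have hge := hgrow t htge
        have hexpge := Real.add_one_le_exp (κ * (t - T'))
        have hmul : y₁ T' * (κ * (t - T')) = (K - δ) + y₁ T' * κ := by
          simp only [htdef]
          field_simp
          ring
        have hfin := hcon t htge
        nlinarith [mul_le_mul_of_nonneg_left hexpge hyT.le]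
      obtain ⟨t₁, ht₁T, ht₁⟩ := hexist
      have hinv := lv_inv_lower (a := t₁) (θ := K - δ)
        (fun t ht => hd₁' t (le_trans hT't₀ (le_trans ht₁T ht)))
        (fun t ht hle =>
          le_trans (mul_nonneg hκ.le (hy₁0 t (le_trans hT't₀ (le_trans ht₁T ht))))
            (hcond t (le_trans ht₁T ht) hle))
        ht₁
      filter_upwards [eventually_ge_atTop t₁] with t ht using hinv t ht
  -- y₁ tends to K
  have hy₁tendsto : Tendsto y₁ atTop (nhds K) := by
    rw [Metric.tendsto_atTop]
    intro e he
    have h1 := (hub (e / 2) (by linarith)).and (hlb (e / 2) (by linarith))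
    rw [eventually_atTop] at h1
    obtain ⟨N, hN⟩ := h1
    refine ⟨N, fun n hn => ?_⟩
    have := hN n hn
    rw [Real.dist_eq, abs_lt]
    constructor <;> [linarith [this.2]; linarith [this.1]]
  exact hy₁tendsto.prodMk_nhds hy₂tendsto
end

section
/- Let B, D, α, U be positive real constants with R := B − D > 0, and fix Lotka–Volterra parameters r₁, r₂ ∈ ℝ, β₁, β₂ > 0 and nonnegative λ₁₁, λ₁₂, λ₂₁, λ₂₂ such that there exists π ∈ ℝ₊² with φ^{s,y}(t) → π as t → ∞ for every s ≥ 0 and y ∈ ℝ₊², where φ^{s,y} is the unique global Lotka–Volterra solution with φ^{s,y}(s) = y. Let (v_t)_{t ≥ 0} be a family of finite nonnegative Borel measures on ℝ₊² such that: (i) sup_{t ≥ 0} v_t(ℝ₊²) < ∞; (ii) the total mass m_t := v_t(ℝ₊²) is differentiable in t, satisfies m₀ > 0 and m_t' = m_t(R − αU·m_t) for all t ≥ 0; and (iii) for every bounded continuous g : ℝ₊² → ℝ and every t ≥ 0 the mild equation ∫ g dv_t = ∫ g(φ^{0,y}(t)) dv₀(y) + ∫₀ᵗ (R − αU·m_s)·(∫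 g(φ^{s,y}(t)) dv_s(y)) ds holds. Then v_t converges weakly, as t → ∞, to the measure (R/(αU))·δ_π, i.e. ∫ g dv_t → (R/(αU))·g(π) for every bounded continuous g. -/
open MeasureTheory Filter Set

lemma logistic_explicit (R a : ℝ) (hR : 0 < R) (ha : 0 < a)
    (m : ℝ → ℝ) (C : ℝ)
    (hm_nonneg : ∀ t, 0 ≤ t → 0 ≤ m t) (hmC : ∀ t, 0 ≤ t → m t ≤ C)
    (hm0 : 0 < m 0)
    (hm_deriv : ∀ t, 0 ≤ t → HasDerivAt m (m t * (R - a * m t)) t) :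
    ∀ t, 0 ≤ t → m t = ((a/R) + (1/(m 0) - a/R) * Real.exp (-(R*t)))⁻¹ := by
  set c : ℝ := 1/(m 0) - a/R with hc
  set u : ℝ → ℝ := fun t => a/R + c * Real.exp (-(R*t)) with hu
  have haR : 0 < a / R := div_pos ha hR
  have hRne : R ≠ 0 := ne_of_gt hR
  have hm0ne : m 0 ≠ 0 := ne_of_gt hm0
  have hum : ∀ t, 0 ≤ t → min (a/R) (1/(m 0)) ≤ u t := by
    intro t ht
    rcases le_or_gt 0 c with h | h
    · have : 0 ≤ c * Real.exp (-(R*t)) := mul_nonneg h (Real.exp_nonneg _)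
      calc min (a/R) (1/(m 0)) ≤ a/R := min_le_left _ _
        _ ≤ u t := by simp [hu]; linarith
    · have he : Real.exp (-(R*t)) ≤ 1 := by
        apply Real.exp_le_one_iff.mpr; nlinarith
      have : c ≤ c * Real.exp (-(R*t)) := by nlinarith [Real.exp_pos (-(R*t))]
      calc min (a/R) (1/(m 0)) ≤ 1/(m 0) := min_le_right _ _
        _ = a/R + c := by simp [hc]
        _ ≤ u t := by simp [hu]; linarith
  have hmin : 0 < min (a/R) (1/(m 0)) := lt_min haR (by positivity)
  have hupos : ∀ t, 0 ≤ t → 0 < u t := fun t ht => lt_of_lt_of_le hmin (hum t ht)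
  have hu' : ∀ t, HasDerivAt u (a - R * u t) t := by
    intro t
    have h1 : HasDerivAt (fun t : ℝ => -(R*t)) (-R) t := by
      simpa [Pi.neg_def] using ((hasDerivAt_id t).const_mul R).neg
    have h2 : HasDerivAt (fun t => Real.exp (-(R*t))) (Real.exp (-(R*t)) * (-R)) t :=
      (Real.hasDerivAt_exp _).comp t h1
    have := (h2.const_mul c).const_add (a/R)
    refine this.congr_deriv ?_
    simp only [hu]
    field_simp
    ring
  have hM' : ∀ t, 0 ≤ t → HasDerivAt (fun t => (u t)⁻¹)
      ((u t)⁻¹ * (R - a * (u t)⁻¹)) t := by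
    intro t ht
    have hne : u t ≠ 0 := ne_of_gt (hupos t ht)
    have := (hu' t).inv hne
    have heq : ∀ w : ℝ, w ≠ 0 → w⁻¹ * (R - a * w⁻¹) = -(a - R * w) / w ^ 2 := by
      intro w hw; rw [eq_div_iff (pow_ne_zero 2 hw)]; field_simp; ring
    rw [heq (u t) hne]; exact this
  -- uniqueness
  set Cb : ℝ := max C (min (a/R) (1/(m 0)))⁻¹ with hCb
  have hCb0 : 0 ≤ Cb := le_trans (le_of_lt (inv_pos.mpr hmin)) (le_max_right _ _)
  set K : NNReal := ⟨|R| + 2*a*Cb, by positivity⟩ with hK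
  have hlip : ∀ t : ℝ, LipschitzOnWith K (fun x => x * (R - a * x)) (Icc (-Cb) Cb) := by
    intro t
    rw [lipschitzOnWith_iff_dist_le_mul]
    intro x hx y hy
    rw [Real.dist_eq, Real.dist_eq]
    have : x * (R - a*x) - y * (R - a*y) = (x - y) * (R - a*(x+y)) := by ring
    rw [this, abs_mul]
    have h1 : |R - a*(x+y)| ≤ |R| + 2*a*Cb := by
      rcases hx with ⟨hx1, hx2⟩; rcases hy with ⟨hy1, hy2⟩
      have := abs_sub (R) (a*(x+y))
      calc |R - a*(x+y)| ≤ |R| + |a*(x+y)| := abs_sub _ _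
        _ ≤ |R| + 2*a*Cb := by
            rw [abs_mul, abs_of_pos ha]
            have : |x + y| ≤ 2*Cb := by
              rw [abs_le]; constructor <;> linarith
            nlinarith
    calc |x - y| * |R - a*(x+y)| ≤ |x - y| * (|R| + 2*a*Cb) := by
          exact mul_le_mul_of_nonneg_left h1 (abs_nonneg _)
      _ = (|R| + 2*a*Cb) * |x - y| := by ring
  intro t ht
  have key : EqOn m (fun t => (u t)⁻¹) (Icc 0 t) := by
    apply ODE_solution_unique_of_mem_Icc_right (fun t _ => hlip t)
    · intro s hs
      exact (hm_deriv s hs.1).continuousAt.continuousWithinAt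
    · intro s hs
      exact ((hm_deriv s hs.1).hasDerivWithinAt)
    · intro s hs
      constructor
      · linarith [hm_nonneg s hs.1, hCb0]
      · exact le_trans (hmC s hs.1) (le_max_left _ _)
    · intro s hs
      exact (hM' s hs.1).continuousAt.continuousWithinAt
    · intro s hs
      exact ((hM' s hs.1).hasDerivWithinAt)
    · intro s hs
      have h1 := hupos s hs.1
      have h2 := hum s hs.1
      constructor
      · have : 0 < (u s)⁻¹ := inv_pos.mpr h1
        linarith
      · calc (u s)⁻¹ ≤ (min (a/R) (1/(m 0)))⁻¹ := by
              exact inv_anti₀ hmin h2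
          _ ≤ Cb := le_max_right _ _
    · simp [hu, hc]
  exact key ⟨ht, le_refl t⟩

lemma logistic_props (R a : ℝ) (hR : 0 < R) (ha : 0 < a)
    (m : ℝ → ℝ) (C : ℝ)
    (hm_nonneg : ∀ t, 0 ≤ t → 0 ≤ m t) (hmC : ∀ t, 0 ≤ t → m t ≤ C)
    (hm0 : 0 < m 0)
    (hm_deriv : ∀ t, 0 ≤ t → HasDerivAt m (m t * (R - a * m t)) t) :
    Tendsto m atTop (nhds (R/a)) ∧
      ∃ K₀ : ℝ, 0 ≤ K₀ ∧ ∀ t, 0 ≤ t → |R - a * m t| ≤ K₀ * Real.exp (-(R*t)) := by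
  have hexp := logistic_explicit R a hR ha m C hm_nonneg hmC hm0 hm_deriv
  set c : ℝ := 1/(m 0) - a/R with hc
  set u : ℝ → ℝ := fun t => a/R + c * Real.exp (-(R*t)) with hu
  have haR : 0 < a / R := div_pos ha hR
  have hum : ∀ t, 0 ≤ t → min (a/R) (1/(m 0)) ≤ u t := by
    intro t ht
    rcases le_or_gt 0 c with h | h
    · have : 0 ≤ c * Real.exp (-(R*t)) := mul_nonneg h (Real.exp_nonneg _)
      calc min (a/R) (1/(m 0)) ≤ a/R := min_le_left _ _
        _ ≤ u t := by simp [hu]; linarith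
    · have he : Real.exp (-(R*t)) ≤ 1 := by
        apply Real.exp_le_one_iff.mpr; nlinarith
      have : c ≤ c * Real.exp (-(R*t)) := by nlinarith [Real.exp_pos (-(R*t))]
      calc min (a/R) (1/(m 0)) ≤ 1/(m 0) := min_le_right _ _
        _ = a/R + c := by simp [hc]
        _ ≤ u t := by simp [hu]; linarith
  have hmin : 0 < min (a/R) (1/(m 0)) := lt_min haR (by positivity)
  have hupos : ∀ t, 0 ≤ t → 0 < u t := fun t ht => lt_of_lt_of_le hmin (hum t ht)
  have hulim : Tendsto u atTop (nhds (a/R)) := by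
    have h1 : Tendsto (fun t : ℝ => -(R*t)) atTop atBot := by
      have := Tendsto.const_mul_atTop hR (tendsto_id (α := ℝ) (x := atTop))
      exact tendsto_neg_atTop_atBot.comp this
    have h2 : Tendsto (fun t => Real.exp (-(R*t))) atTop (nhds 0) :=
      Real.tendsto_exp_atBot.comp h1
    have := (h2.const_mul c).const_add (a/R)
    simpa using this
  constructor
  · have hmu : Tendsto (fun t => (u t)⁻¹) atTop (nhds ((a/R)⁻¹)) :=
      hulim.inv₀ (ne_of_gt haR)
    have : (a/R)⁻¹ = R/a := by rw [inv_div]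
    rw [this] at hmu
    apply hmu.congr'
    filter_upwards [eventually_ge_atTop (0:ℝ)] with t ht
    exact (hexp t ht).symm
  · refine ⟨R * |c| / min (a/R) (1/(m 0)), by positivity, ?_⟩
    intro t ht
    rw [hexp t ht]
    have hut : 0 < u t := hupos t ht
    have hRne : R ≠ 0 := ne_of_gt hR
    have key : R - a * (u t)⁻¹ = R * c * Real.exp (-(R*t)) / u t := by
      have hne : u t ≠ 0 := ne_of_gt hut
      rw [eq_div_iff hne]
      have h4 : (R - a * (u t)⁻¹) * u t = R * u t - a * ((u t)⁻¹ * u t) := by ring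
      rw [h4, inv_mul_cancel₀ hne, mul_one]
      show R * (a/R + c * Real.exp (-(R*t))) - a = _
      rw [mul_add, mul_div_cancel₀ _ hRne]
      ring
    rw [key, abs_div, abs_of_pos hut, abs_mul, abs_mul, abs_of_pos hR,
      abs_of_pos (Real.exp_pos _)]
    rw [div_le_iff₀ hut]
    have h1 : R * |c| / min (a/R) (1/(m 0)) * Real.exp (-(R*t)) * u t
        ≥ R * |c| * Real.exp (-(R*t)) := by
      have h2 := hum t ht
      have h3 : R * |c| / min (a/R) (1/(m 0)) * u t ≥ R * |c| := by
        rw [ge_iff_le, div_mul_eq_mul_div, le_div_iff₀ hmin]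
        exact mul_le_mul_of_nonneg_left h2 (by positivity)
      nlinarith [Real.exp_pos (-(R*t)), abs_nonneg c]
    linarith

lemma tendsto_split {α : Type*} {f : ℝ → α} {l : Filter α} {S : Set ℝ}
    (h1 : Tendsto f (atTop ⊓ 𝓟 S) l) (h2 : Tendsto f (atTop ⊓ 𝓟 Sᶜ) l) :
    Tendsto f atTop l := by
  have heq : (atTop : Filter ℝ) = (atTop ⊓ 𝓟 S) ⊔ (atTop ⊓ 𝓟 Sᶜ) := by
    rw [← inf_sup_left, sup_principal, union_compl_self, principal_univ, inf_top_eq]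
  rw [heq]
  exact tendsto_sup.mpr ⟨h1, h2⟩

/-- Convergence of the mean-field deterministic measure flow towards the singular
measure concentrated on the Lotka–Volterra equilibrium: if every Lotka–Volterra
trajectory converges to an equilibrium `π`, the total mass `m_t = v_t(ℝ₊²)` follows
the logistic equation `m' = m(R − αU m)` with `m₀ > 0`, the masses are uniformly
bounded, and `(v_t)` satisfies the mild equation, then `v_t → (R/(αU))·δ_π` weakly
as `t → ∞`. -/
theorem meanField_convergence_to_dirac_equilibrium
    (B D α U : ℝ) (hB : 0 < B) (hD : 0 < D) (hα : 0 < α) (hU : 0 < U)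
    (R : ℝ) (hR : R = B - D) (hRpos : 0 < R)
    (r₁ r₂ β₁ β₂ l₁₁ l₁₂ l₂₁ l₂₂ : ℝ)
    (hβ₁ : 0 < β₁) (hβ₂ : 0 < β₂)
    (hl₁₁ : 0 ≤ l₁₁) (hl₁₂ : 0 ≤ l₁₂) (hl₂₁ : 0 ≤ l₂₁) (hl₂₂ : 0 ≤ l₂₂)
    -- `φ s y` is the unique global Lotka–Volterra solution with `φ s y s = y`:
    (φ : ℝ → ℝ × ℝ → ℝ → ℝ × ℝ)
    (hφ_init : ∀ s : ℝ, 0 ≤ s → ∀ y : ℝ × ℝ, 0 ≤ y.1 → 0 ≤ y.2 → φ s y s = y)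
    (hφ_deriv : ∀ s : ℝ, 0 ≤ s → ∀ y : ℝ × ℝ, 0 ≤ y.1 → 0 ≤ y.2 →
      ∀ t : ℝ, s ≤ t →
        HasDerivAt (φ s y)
          ((φ s y t).1 * (r₁ - β₁ * (l₁₁ * (φ s y t).1 + l₁₂ * (φ s y t).2)),
           (φ s y t).2 * (r₂ - β₂ * (l₂₁ * (φ s y t).1 + l₂₂ * (φ s y t).2))) t)
    (hφ_quad : ∀ s : ℝ, 0 ≤ s → ∀ y : ℝ × ℝ, 0 ≤ y.1 → 0 ≤ y.2 →
      ∀ t : ℝ, s ≤ t → 0 ≤ (φ s y t).1 ∧ 0 ≤ (φ s y t).2)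
    (hφ_uniq : ∀ s : ℝ, 0 ≤ s → ∀ y : ℝ × ℝ, 0 ≤ y.1 → 0 ≤ y.2 →
      ∀ z : ℝ → ℝ × ℝ, z s = y →
        (∀ t : ℝ, s ≤ t →
          HasDerivAt z
            ((z t).1 * (r₁ - β₁ * (l₁₁ * (z t).1 + l₁₂ * (z t).2)),
             (z t).2 * (r₂ - β₂ * (l₂₁ * (z t).1 + l₂₂ * (z t).2))) t) →
        ∀ t : ℝ, s ≤ t → z t = φ s y t)
    -- every trajectory converges to the equilibrium `π ∈ ℝ₊²`:
    (π : ℝ × ℝ) (hπ : 0 ≤ π.1 ∧ 0 ≤ π.2)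
    (hφ_lim : ∀ s : ℝ, 0 ≤ s → ∀ y : ℝ × ℝ, 0 ≤ y.1 → 0 ≤ y.2 →
      Tendsto (fun t => φ s y t) atTop (nhds π))
    -- the family of finite measures `(v_t)` on `ℝ₊²`:
    (v : ℝ → Measure (ℝ × ℝ))
    (hv_fin : ∀ t : ℝ, IsFiniteMeasure (v t))
    (hv_quad : ∀ t : ℝ, 0 ≤ t → v t {y : ℝ × ℝ | ¬ (0 ≤ y.1 ∧ 0 ≤ y.2)} = 0)
    -- (i) uniformly bounded total masses:
    (hv_bdd : ∃ C : ℝ, ∀ t : ℝ, 0 ≤ t → ((v t) Set.univ).toReal ≤ C)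
    -- (ii) the total mass follows the logistic equation:
    (m : ℝ → ℝ) (hm_def : ∀ t : ℝ, m t = ((v t) Set.univ).toReal)
    (hm0 : 0 < m 0)
    (hm_deriv : ∀ t : ℝ, 0 ≤ t → HasDerivAt m (m t * (R - α * U * m t)) t)
    -- (iii) the mild equation:
    (hmild : ∀ g : BoundedContinuousFunction (ℝ × ℝ) ℝ, ∀ t : ℝ, 0 ≤ t →
      ∫ y, g y ∂(v t) =
        (∫ y, g (φ 0 y t) ∂(v 0)) +
        ∫ s in (0:ℝ)..t, (R - α * U * m s) * ∫ y, g (φ s y t) ∂(v s)) :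
    -- conclusion: weak convergence of `v_t` to `(R/(αU))·δ_π`:
    ∀ g : BoundedContinuousFunction (ℝ × ℝ) ℝ,
      Tendsto (fun t => ∫ y, g y ∂(v t)) atTop (nhds ((R / (α * U)) * g π)) := by
  intro g
  have ha : 0 < α * U := mul_pos hα hU
  obtain ⟨C, hC⟩ := hv_bdd
  have hm_nonneg : ∀ t : ℝ, 0 ≤ t → 0 ≤ m t := fun t _ => (hm_def t) ▸ ENNReal.toReal_nonneg
  have hmC : ∀ t : ℝ, 0 ≤ t → m t ≤ C := fun t ht => (hm_def t) ▸ hC t ht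
  have hC0 : 0 ≤ C := le_trans (hm_nonneg 0 le_rfl) (hmC 0 le_rfl)
  obtain ⟨hm_tendsto, K₀, hK₀, hwb⟩ :=
    logistic_props R (α*U) hRpos ha m C hm_nonneg hmC hm0 hm_deriv
  set h : BoundedContinuousFunction (ℝ × ℝ) ℝ :=
    g - BoundedContinuousFunction.const (ℝ × ℝ) (g π) with hhdef
  have hcoe : ∀ y : ℝ × ℝ, h y = g y - g π := fun y => by simp [hhdef]
  have hhπ : h π = 0 := by rw [hcoe]; ring
  have hhb : ∀ y : ℝ × ℝ, ‖h y‖ ≤ ‖h‖ := fun y => BoundedContinuousFunction.norm_coe_le_norm h y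
  have hMh0 : (0:ℝ) ≤ ‖h‖ := norm_nonneg _
  have hae : ∀ s : ℝ, 0 ≤ s → ∀ᵐ y ∂(v s), 0 ≤ y.1 ∧ 0 ≤ y.2 := by
    intro s hs
    rw [ae_iff]
    exact hv_quad s hs
  have hJ : ∀ s : ℝ, 0 ≤ s →
      Tendsto (fun t => ∫ y, h (φ s y t) ∂(v s)) atTop (nhds 0) := by
    intro s hs
    haveI := hv_fin s
    apply tendsto_split (S := {t : ℝ | Integrable (fun y => h (φ s y t)) (v s)})
    · have := MeasureTheory.tendsto_integral_filter_of_dominated_convergence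
        (μ := v s) (l := atTop ⊓ 𝓟 {t : ℝ | Integrable (fun y => h (φ s y t)) (v s)})
        (F := fun t y => h (φ s y t)) (f := fun _ => (0:ℝ)) (fun _ => ‖h‖)
        ?_ ?_ ?_ ?_
      · simpa using this
      · rw [eventually_inf_principal]
        exact Eventually.of_forall fun t ht => ht.aestronglyMeasurable
      · exact Eventually.of_forall fun t => Eventually.of_forall fun y => hhb _
      · exact integrable_const _
      · filter_upwards [hae s hs] with y hy
        have h1 : Tendsto (fun t => h (φ s y t)) atTop (nhds (h π)) :=
          (h.continuous.tendsto π).comp (hφ_lim s hs y hy.1 hy.2)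
        rw [hhπ] at h1
        exact h1.mono_left inf_le_left
    · apply Tendsto.congr' _ tendsto_const_nhds
      rw [EventuallyEq, eventually_inf_principal]
      exact Eventually.of_forall fun t ht => (integral_undef ht).symm
  have hJb : ∀ s : ℝ, 0 ≤ s → ∀ t : ℝ, ‖∫ y, h (φ s y t) ∂(v s)‖ ≤ ‖h‖ * C := by
    intro s hs t
    haveI := hv_fin s
    calc ‖∫ y, h (φ s y t) ∂(v s)‖ ≤ ‖h‖ * ((v s) univ).toReal :=
          norm_integral_le_of_norm_le_const (Eventually.of_forall fun y => hhb _)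
      _ = ‖h‖ * m s := by rw [hm_def s]
      _ ≤ ‖h‖ * C := mul_le_mul_of_nonneg_left (hmC s hs) hMh0
  have hmcont : ∀ s : ℝ, 0 ≤ s → ContinuousAt m s := fun s hs => (hm_deriv s hs).continuousAt
  have hT2 : Tendsto (fun t => ∫ s in (0:ℝ)..t,
      (R - α*U*m s) * ∫ y, h (φ s y t) ∂(v s)) atTop (nhds 0) := by
    set F : ℝ → ℝ → ℝ := fun t s => (R - α*U*m s) * ∫ y, h (φ s y t) ∂(v s) with hFdef
    set G : Set ℝ := {t : ℝ | IntervalIntegrable (F t) volume 0 t} with hGdef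
    apply tendsto_split (S := G)
    · set l : Filter ℝ := atTop ⊓ 𝓟 G with hldef
      have hlG : ∀ᶠ t in l, t ∈ G :=
        eventually_inf_principal.mpr (Eventually.of_forall fun _ ht => ht)
      rw [Metric.tendsto_nhds]
      intro ε hε
      obtain ⟨T, hTb, hT0⟩ : ∃ T : ℝ, ‖h‖*C*K₀/R * Real.exp (-(R*T)) < ε/2 ∧ 0 ≤ T := by
        have h1 : Tendsto (fun t : ℝ => -(R*t)) atTop atBot := by
          have := Tendsto.const_mul_atTop hRpos (tendsto_id (α := ℝ) (x := atTop))
          exact tendsto_neg_atTop_atBot.comp this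
        have h2 : Tendsto (fun t : ℝ => Real.exp (-(R*t))) atTop (nhds 0) :=
          Real.tendsto_exp_atBot.comp h1
        have h3 : Tendsto (fun t : ℝ => ‖h‖*C*K₀/R * Real.exp (-(R*t))) atTop (nhds 0) := by
          have := h2.const_mul (‖h‖*C*K₀/R)
          simpa using this
        exact ((h3.eventually_lt_const (half_pos hε)).and (eventually_ge_atTop 0)).exists
      have hsub1 : ∀ t : ℝ, T ≤ t → uIcc (0:ℝ) T ⊆ uIcc (0:ℝ) t := by
        intro t htT
        rw [uIcc_of_le hT0, uIcc_of_le (le_trans hT0 htT)]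
        exact Icc_subset_Icc le_rfl htT
      have hsub2 : ∀ t : ℝ, T ≤ t → uIcc T t ⊆ uIcc (0:ℝ) t := by
        intro t htT
        rw [uIcc_of_le htT, uIcc_of_le (le_trans hT0 htT)]
        exact Icc_subset_Icc hT0 le_rfl
      have hDCT : Tendsto (fun t => ∫ s in (0:ℝ)..T, F t s) l (nhds 0) := by
        have key := intervalIntegral.tendsto_integral_filter_of_dominated_convergence
          (μ := volume) (a := 0) (b := T) (l := l) (F := F) (f := fun _ => (0:ℝ))
          (bound := fun s => |R - α*U*m s| * (‖h‖ * C)) ?_ ?_ ?_ ?_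
        · simpa using key
        · have h2 : ∀ᶠ t in l, T ≤ t := (eventually_ge_atTop T).filter_mono inf_le_left
          filter_upwards [hlG, h2] with t htG htT
          have : IntervalIntegrable (F t) volume 0 T := htG.mono_set (hsub1 t htT)
          exact (intervalIntegrable_iff.mp this).aestronglyMeasurable
        · apply Eventually.of_forall; intro t
          apply Eventually.of_forall; intro s hs
          rw [uIoc_of_le hT0] at hs
          have hs0 : 0 ≤ s := le_of_lt hs.1
          simp only [hFdef, Real.norm_eq_abs, abs_mul]
          exact mul_le_mul_of_nonneg_left (by simpa [Real.norm_eq_abs] using hJb s hs0 t)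
            (abs_nonneg _)
        · apply ContinuousOn.intervalIntegrable
          apply ContinuousOn.mul _ continuousOn_const
          apply ContinuousOn.abs
          apply ContinuousOn.sub continuousOn_const
          apply ContinuousOn.mul continuousOn_const
          intro s hs
          rw [uIcc_of_le hT0] at hs
          exact (hmcont s hs.1).continuousWithinAt
        · apply Eventually.of_forall; intro s hs
          rw [uIoc_of_le hT0] at hs
          have := ((hJ s (le_of_lt hs.1)).const_mul (R - α*U*m s)).mono_left
            (inf_le_left : l ≤ atTop)
          simpa using this
      have hfin : ∀ᶠ t in l, |∫ s in (0:ℝ)..T, F t s| < ε/2 := by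
        have := Metric.tendsto_nhds.mp hDCT (ε/2) (half_pos hε)
        filter_upwards [this] with t ht
        rwa [Real.dist_eq, sub_zero] at ht
      have hT' : ∀ᶠ t in l, T ≤ t := (eventually_ge_atTop T).filter_mono inf_le_left
      filter_upwards [hfin, hlG, hT'] with t h1 h2 h3
      rw [Real.dist_eq, sub_zero]
      have hi1 : IntervalIntegrable (F t) volume 0 T := h2.mono_set (hsub1 t h3)
      have hi2 : IntervalIntegrable (F t) volume T t := h2.mono_set (hsub2 t h3)
      have hsplit : ∫ s in (0:ℝ)..t, F t s = (∫ s in (0:ℝ)..T, F t s) + ∫ s in T..t, F t s :=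
        (intervalIntegral.integral_add_adjacent_intervals hi1 hi2).symm
      rw [hsplit]
      have hbc : Continuous (fun s : ℝ => K₀ * Real.exp (-(R*s)) * (‖h‖*C)) := by
        apply Continuous.mul _ continuous_const
        exact continuous_const.mul (Real.continuous_exp.comp (continuous_const.mul continuous_id).neg)
      have htail1 : ‖∫ s in T..t, F t s‖ ≤ |∫ s in T..t, K₀ * Real.exp (-(R*s)) * (‖h‖*C)| := by
        apply intervalIntegral.norm_integral_le_abs_of_norm_le _ (hbc.intervalIntegrable T t)
        apply (ae_restrict_mem measurableSet_uIoc).mono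
        intro s hs
        rw [uIoc_of_le h3] at hs
        have hs0 : 0 ≤ s := le_trans hT0 (le_of_lt hs.1)
        simp only [hFdef, Real.norm_eq_abs, abs_mul]
        exact mul_le_mul (by simpa using hwb s hs0) (by simpa [Real.norm_eq_abs] using hJb s hs0 t)
          (abs_nonneg _) (mul_nonneg hK₀ (Real.exp_nonneg _))
      have hcomp : ∫ s in T..t, K₀ * Real.exp (-(R*s)) * (‖h‖*C)
          = K₀ * (‖h‖*C) * ((Real.exp (-(R*T)) - Real.exp (-(R*t))) / R) := by
        have hder : ∀ s ∈ uIcc T t,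
            HasDerivAt (fun s => -(K₀ * (‖h‖*C) / R) * Real.exp (-(R*s)))
              (K₀ * Real.exp (-(R*s)) * (‖h‖*C)) s := by
          intro s _
          have hd1 : HasDerivAt (fun s : ℝ => -(R*s)) (-R) s := by
            simpa [Pi.neg_def] using ((hasDerivAt_id s).const_mul R).neg
          have hd2 : HasDerivAt (fun s : ℝ => Real.exp (-(R*s)))
              (Real.exp (-(R*s)) * (-R)) s := (Real.hasDerivAt_exp _).comp s hd1
          have := hd2.const_mul (-(K₀ * (‖h‖*C) / R))
          refine this.congr_deriv ?_
          field_simp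
        rw [intervalIntegral.integral_eq_sub_of_hasDerivAt hder (hbc.intervalIntegrable T t)]
        field_simp
        ring
      have hexple : Real.exp (-(R*t)) ≤ Real.exp (-(R*T)) := by
        apply Real.exp_le_exp.mpr
        nlinarith
      have htail2 : |∫ s in T..t, K₀ * Real.exp (-(R*s)) * (‖h‖*C)| ≤
          ‖h‖*C*K₀/R * Real.exp (-(R*T)) := by
        have hnn2 : (0:ℝ) ≤ (Real.exp (-(R*T)) - Real.exp (-(R*t))) / R :=
          div_nonneg (by linarith) hRpos.le
        have hnn : (0:ℝ) ≤ K₀ * (‖h‖*C) := mul_nonneg hK₀ (mul_nonneg hMh0 hC0)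
        rw [hcomp, abs_of_nonneg (mul_nonneg hnn hnn2)]
        have h9 : (Real.exp (-(R*T)) - Real.exp (-(R*t))) / R ≤ Real.exp (-(R*T)) / R := by
          gcongr
          linarith [Real.exp_pos (-(R*t))]
        calc K₀ * (‖h‖*C) * ((Real.exp (-(R*T)) - Real.exp (-(R*t))) / R)
            ≤ K₀ * (‖h‖*C) * (Real.exp (-(R*T)) / R) := mul_le_mul_of_nonneg_left h9 hnn
          _ = ‖h‖*C*K₀/R * Real.exp (-(R*T)) := by ring
      rw [Real.norm_eq_abs] at htail1
      have ht3 : |∫ s in T..t, F t s| < ε/2 := lt_of_le_of_lt (le_trans htail1 htail2) hTb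
      calc |(∫ s in (0:ℝ)..T, F t s) + ∫ s in T..t, F t s|
          ≤ |∫ s in (0:ℝ)..T, F t s| + |∫ s in T..t, F t s| := abs_add_le _ _
        _ < ε := by linarith
    · apply Tendsto.congr' _ tendsto_const_nhds
      rw [EventuallyEq, eventually_inf_principal]
      exact Eventually.of_forall fun t ht => (intervalIntegral.integral_undef ht).symm
  have hmain : Tendsto (fun t => ∫ y, h y ∂(v t)) atTop (nhds 0) := by
    have hsum := (hJ 0 le_rfl).add hT2
    rw [add_zero] at hsum
    have heq : (fun t => (∫ y, h (φ 0 y t) ∂(v 0)) + ∫ s in (0:ℝ)..t,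
        (R - α*U*m s) * ∫ y, h (φ s y t) ∂(v s)) =ᶠ[atTop] (fun t => ∫ y, h y ∂(v t)) := by
      filter_upwards [eventually_ge_atTop (0:ℝ)] with t ht
      exact (hmild h t ht).symm
    exact Tendsto.congr' heq hsum
  have hfinal : ∀ t : ℝ, 0 ≤ t → ∫ y, g y ∂(v t) = (∫ y, h y ∂(v t)) + m t * g π := by
    intro t ht
    haveI := hv_fin t
    have hint : Integrable (fun y => g y) (v t) := g.integrable (v t)
    have h5 : ∫ y, h y ∂(v t) = ∫ y, (g y - g π) ∂(v t) :=
      integral_congr_ae (Eventually.of_forall fun y => hcoe y)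
    rw [h5, integral_sub hint (integrable_const _), integral_const, smul_eq_mul, hm_def t]
    rw [measureReal_def]; ring
  have hlim2 := hmain.add (hm_tendsto.mul_const (g π))
  rw [zero_add] at hlim2
  have heq2 : (fun t => (∫ y, h y ∂(v t)) + m t * g π) =ᶠ[atTop]
      (fun t => ∫ y, g y ∂(v t)) := by
    filter_upwards [eventually_ge_atTop (0:ℝ)] with t ht
    exact (hfinal t ht).symm
  exact Tendsto.congr' heq2 hlim2
end
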